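/- arXiv:2404.01118 — 5 statements merged into one kernel-verified Lean document; each statement's English description precedes it below -/
import Mathlib

section
/- Let $(a_n)_{n\ge 1}$ be a sequence of real numbers with $1 \le a_n$, $a_n$ nondecreasing, and $a_n \to \infty$. Then for every $\lambda > 1$ there exists a strictly increasing sequence of indices $(n_k)_{k\ge 1}$ with $n_k \to \infty$ such that $\lambda a_{n_k} \le a_{n_{k+1}} \le \lambda^3 a_{n_k+1}$ for all $k$. -/
open Filter

/-- Invariant for the Wittmann subsequence construction. -/
def WInv (a : ℕ → ℝ) (lam : ℝ) (m : ℕ) : Prop :=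
  (∀ i, m ≤ i → a (i + 1) ≤ lam * a i) ∨
  (lam * a m < a (m + 1)) ∨
  (∃ r, m < r ∧ lam * a r < a (r + 1) ∧ (∀ i, m ≤ i → i < r → a (i + 1) ≤ lam * a i) ∧
    ∃ k : ℕ, lam ^ (2 * k + 1) * a m ≤ a r ∧ a r ≤ lam ^ (2 * k + 2) * a m)

lemma wstep (a : ℕ → ℝ) (h1 : ∀ n, 1 ≤ a n) (hmono : Monotone a)
    (htop : Tendsto a atTop atTop) (lam : ℝ) (hl : 1 < lam) (m : ℕ) (hm : WInv a lam m) :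
    ∃ m', m < m' ∧ WInv a lam m' ∧ lam * a m ≤ a m' ∧ a m' ≤ lam ^ 3 * a (m + 1) := by
  classical
  have ha : ∀ n, (0:ℝ) < a n := fun n => lt_of_lt_of_le one_pos (h1 n)
  have hl0 : (0:ℝ) < lam := lt_trans one_pos hl
  have hl1 : (1:ℝ) ≤ lam := hl.le
  have hpow : ∀ j : ℕ, (1:ℝ) ≤ lam ^ j := fun j => one_le_pow₀ hl1
  have hmm1 : a m ≤ a (m + 1) := hmono (Nat.le_succ m)
  rcases hm with hT | hP | ⟨r, hmr, hPr, hslow, K, hs1, hs2⟩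
  · -- Tail case: all steps slow from m on; first passage at level lam * a m
    have hex : ∃ i, lam * a m ≤ a i := (htop.eventually_ge_atTop _).exists
    obtain ⟨p, hp, hpmin⟩ : ∃ p, (lam * a m ≤ a p) ∧ ∀ j, j < p → a j < lam * a m := by
      refine ⟨Nat.find hex, Nat.find_spec hex, fun j hj => ?_⟩
      have := Nat.find_min hex hj
      push_neg at this
      exact this
    have hpm : m < p := by
      by_contra hcon
      push_neg at hcon
      have h2 : a p ≤ a m := hmono hcon
      nlinarith [ha m]
    refine ⟨p, hpm, Or.inl fun i hi => hT i (hpm.le.trans hi), hp, ?_⟩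
    rcases eq_or_lt_of_le (Nat.succ_le_of_lt hpm) with he | h2
    · rw [← he]
      nlinarith [ha (m+1), hpow 3]
    · have h4 : a (p-1) < lam * a m := hpmin _ (by omega)
      have h5 : a p ≤ lam * a (p-1) := by
        have h6 := hT (p-1) (by omega)
        have h7 : p - 1 + 1 = p := by omega
        rwa [h7] at h6
      have hc : lam ^ 3 = lam * lam * lam := by ring
      nlinarith [ha m, ha (m+1), ha (p-1), mul_lt_mul_of_pos_left h4 hl0,
        mul_le_mul_of_nonneg_left hmm1 (mul_nonneg hl0.le hl0.le),
        mul_le_mul_of_nonneg_right hl1 (mul_nonneg (mul_nonneg hl0.le hl0.le) (ha (m+1)).le)]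
  · -- Pre-jump case
    by_cases hex : ∃ r, m < r ∧ lam * a r < a (r + 1)
    · obtain ⟨r, hr1, hr2, hrmin⟩ : ∃ r, m < r ∧ lam * a r < a (r + 1) ∧
          ∀ j, j < r → m < j → a (j+1) ≤ lam * a j := by
        refine ⟨Nat.find hex, (Nat.find_spec hex).1, (Nat.find_spec hex).2, fun j hj hmj => ?_⟩
        by_contra hcon
        push_neg at hcon
        exact Nat.find_min hex hj ⟨hmj, hcon⟩
      have hBm1 : a (m+1) ≤ a r := hmono hr1
      obtain ⟨I, hi1, hi2⟩ : ∃ I, (lam ^ (2*I) * a (m+1) ≤ a r) ∧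
          (a r < lam ^ (2*I+2) * a (m+1)) := by
        have hexF : ∃ i, a r < lam ^ (2*i) * a (m+1) := by
          obtain ⟨j, hj⟩ := pow_unbounded_of_one_lt (a r / a (m+1)) hl
          have h2 : a r < lam ^ j * a (m+1) := (div_lt_iff₀ (ha (m+1))).mp hj
          have h3 : lam ^ j ≤ lam ^ (2*j) := pow_le_pow_right₀ hl1 (by omega)
          exact ⟨j, by nlinarith [ha (m+1)]⟩
        have hJne : Nat.find hexF ≠ 0 := by
          intro h0
          have h2 := Nat.find_spec hexF
          rw [h0] at h2
          norm_num at h2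
          linarith
        obtain ⟨I, hIfind⟩ : ∃ I, Nat.find hexF = I + 1 := ⟨Nat.find hexF - 1, by omega⟩
        refine ⟨I, ?_, ?_⟩
        · have h2 := Nat.find_min hexF (show I < Nat.find hexF by omega)
          push_neg at h2
          exact h2
        · have h2 := Nat.find_spec hexF
          rw [hIfind] at h2
          have h3 : 2*(I+1) = 2*I+2 := by omega
          rwa [h3] at h2
      rcases Nat.eq_zero_or_pos I with hz | hIpos
      · -- I = 0 : enter r directly
        subst hz
        refine ⟨r, hr1, Or.inr (Or.inl hr2), le_trans hP.le hBm1, ?_⟩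
        have h2 : lam ^ 2 ≤ lam ^ 3 := pow_le_pow_right₀ hl1 (by omega)
        norm_num at hi2
        nlinarith [ha (m+1)]
      · -- I ≥ 1 : first passage at level a r / lam^(2I)
        have hrself : a r ≤ lam ^ (2*I) * a r := le_mul_of_one_le_left (ha r).le (hpow (2*I))
        have hexQ : ∃ i, a r ≤ lam ^ (2*I) * a i := ⟨r, hrself⟩
        obtain ⟨p, hpQ, hpmin, hpr⟩ : ∃ p, (a r ≤ lam ^ (2*I) * a p) ∧
            (∀ j, j < p → lam ^ (2*I) * a j < a r) ∧ p ≤ r := by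
          refine ⟨Nat.find hexQ, Nat.find_spec hexQ, fun j hj => ?_, Nat.find_le hrself⟩
          have := Nat.find_min hexQ hj
          push_neg at this
          exact this
        have hpm : m < p := by
          by_contra hcon
          push_neg at hcon
          have h2 : a p ≤ a m := hmono hcon
          have h3 : a m < a (m+1) := by nlinarith [ha m]
          nlinarith [pow_pos hl0 (2*I)]
        have hfp1 : a (m+1) ≤ a p := by
          have h2 : lam ^ (2*I) * a (m+1) ≤ lam ^ (2*I) * a p := le_trans hi1 hpQ
          exact le_of_mul_le_mul_left h2 (pow_pos hl0 (2*I))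
        have hlow : lam * a m ≤ a p := le_trans hP.le hfp1
        have hkey : a p ≤ lam ^ 3 * a (m+1) ∧ lam ^ (2*I) * a p ≤ lam * a r := by
          rcases eq_or_lt_of_le (Nat.succ_le_of_lt hpm) with he | h2
          · constructor
            · rw [← he]
              nlinarith [ha (m+1), hpow 3]
            · rw [← he]
              nlinarith [ha r, hi1]
          · have hq1 : m < p - 1 := by omega
            have hq2 : p - 1 < r := by omega
            have hqmin : lam ^ (2*I) * a (p-1) < a r := hpmin _ (by omega)
            have hqslow : a p ≤ lam * a (p-1) := by
              have h6 := hrmin (p-1) hq2 hq1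
              have h7 : p - 1 + 1 = p := by omega
              rwa [h7] at h6
            have hslot : lam ^ (2*I) * a p ≤ lam * a r := by
              have h8 : lam ^ (2*I) * a p ≤ lam ^ (2*I) * (lam * a (p-1)) :=
                mul_le_mul_of_nonneg_left hqslow (le_of_lt (pow_pos hl0 _))
              have h10 : lam * (lam ^ (2*I) * a (p-1)) ≤ lam * a r :=
                mul_le_mul_of_nonneg_left hqmin.le hl0.le
              have h9 : lam ^ (2*I) * (lam * a (p-1)) = lam * (lam ^ (2*I) * a (p-1)) := by ring
              linarith
            refine ⟨?_, hslot⟩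
            have h11 : lam * a r < lam * (lam ^ (2*I + 2) * a (m+1)) :=
              mul_lt_mul_of_pos_left hi2 hl0
            have h13 : lam * (lam ^ (2*I+2) * a (m+1)) = lam ^ (2*I) * (lam^3 * a (m+1)) := by
              rw [pow_add]
              ring
            have h14 : lam ^ (2*I) * a p ≤ lam ^ (2*I) * (lam^3 * a (m+1)) := by
              rw [← h13]
              linarith
            exact le_of_mul_le_mul_left h14 (pow_pos hl0 _)
        obtain ⟨hup, hslot⟩ := hkey
        refine ⟨p, hpm, ?_, hlow, hup⟩
        rcases eq_or_lt_of_le hpr with hpe | hplt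
        · exact Or.inr (Or.inl (by rw [hpe]; exact hr2))
        · refine Or.inr (Or.inr ⟨r, hplt, hr2, ?_, ?_⟩)
          · intro i hpi hir
            exact hrmin i hir (lt_of_lt_of_le hpm hpi)
          · obtain ⟨I', hI'⟩ : ∃ I', I = I' + 1 := ⟨I - 1, by omega⟩
            refine ⟨I', ?_, ?_⟩
            · have h15 : lam ^ (2*I) = lam * lam ^ (2*I'+1) := by
                rw [hI', show 2*(I'+1) = (2*I'+1)+1 by omega, pow_succ]
                ring
              rw [h15, mul_assoc] at hslot
              exact le_of_mul_le_mul_left hslot hl0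
            · have h17 : 2*I'+2 = 2*I := by omega
              rw [h17]
              exact hpQ
    · push_neg at hex
      refine ⟨m+1, Nat.lt_succ_self m, Or.inl ?_, hP.le, ?_⟩
      · intro i hi
        exact hex i (lt_of_lt_of_le (Nat.lt_succ_self m) hi)
      · nlinarith [ha (m+1), hpow 3]
  · -- Slow-slot case
    rcases Nat.eq_zero_or_pos K with hz | hKpos
    · subst hz
      refine ⟨r, hmr, Or.inr (Or.inl hPr), ?_, ?_⟩
      · have h2 : lam ^ (2*0+1) = lam := by norm_num
        rw [h2] at hs1
        exact hs1
      · have h2 : lam ^ (2*0+2) = lam^2 := by norm_num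
        rw [h2] at hs2
        have h3 : lam ^ 2 ≤ lam ^ 3 := pow_le_pow_right₀ hl1 (by omega)
        nlinarith [ha m, ha (m+1), sq_nonneg lam]
    · obtain ⟨K', hK'⟩ : ∃ K', K = K' + 1 := ⟨K - 1, by omega⟩
      have hrself : a r ≤ lam ^ (2*K) * a r := le_mul_of_one_le_left (ha r).le (hpow (2*K))
      have hexQ : ∃ i, a r ≤ lam ^ (2*K) * a i := ⟨r, hrself⟩
      obtain ⟨p, hpQ, hpmin, hpr⟩ : ∃ p, (a r ≤ lam ^ (2*K) * a p) ∧
          (∀ j, j < p → lam ^ (2*K) * a j < a r) ∧ p ≤ r := by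
        refine ⟨Nat.find hexQ, Nat.find_spec hexQ, fun j hj => ?_, Nat.find_le hrself⟩
        have := Nat.find_min hexQ hj
        push_neg at this
        exact this
      have hs1' : lam * (lam ^ (2*K) * a m) ≤ a r := by
        have h2 : lam ^ (2*K+1) = lam * lam ^ (2*K) := by rw [pow_succ]; ring
        rw [h2, mul_assoc] at hs1
        exact hs1
      have hpm : m < p := by
        by_contra hcon
        push_neg at hcon
        have h2 : a p ≤ a m := hmono hcon
        have h3 : lam ^ (2*K) * a m < lam * (lam ^ (2*K) * a m) :=
          lt_mul_of_one_lt_left (mul_pos (pow_pos hl0 _) (ha m)) hl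
        have h4 : lam ^ (2*K) * a p ≤ lam ^ (2*K) * a m :=
          mul_le_mul_of_nonneg_left h2 (pow_pos hl0 _).le
        linarith
      have hq1 : m ≤ p - 1 := by omega
      have hq2 : p - 1 < r := by omega
      have hqmin : lam ^ (2*K) * a (p-1) < a r := hpmin _ (by omega)
      have hqslow : a p ≤ lam * a (p-1) := by
        have h6 := hslow (p-1) hq1 hq2
        have h7 : p - 1 + 1 = p := by omega
        rwa [h7] at h6
      have hslot : lam ^ (2*K) * a p ≤ lam * a r := by
        have h8 : lam ^ (2*K) * a p ≤ lam ^ (2*K) * (lam * a (p-1)) :=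
          mul_le_mul_of_nonneg_left hqslow (le_of_lt (pow_pos hl0 _))
        have h10 : lam * (lam ^ (2*K) * a (p-1)) ≤ lam * a r :=
          mul_le_mul_of_nonneg_left hqmin.le hl0.le
        have h9 : lam ^ (2*K) * (lam * a (p-1)) = lam * (lam ^ (2*K) * a (p-1)) := by ring
        linarith
      have hlow : lam * a m ≤ a p := by
        have h2 : lam ^ (2*K) * (lam * a m) ≤ lam ^ (2*K) * a p := by
          have e : lam ^ (2*K) * (lam * a m) = lam * (lam ^ (2*K) * a m) := by ring
          rw [e]
          linarith
        exact le_of_mul_le_mul_left h2 (pow_pos hl0 _)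
      have hup : a p ≤ lam ^ 3 * a (m+1) := by
        have h2 : lam * a r ≤ lam * (lam ^ (2*K+2) * a m) :=
          mul_le_mul_of_nonneg_left hs2 hl0.le
        have h3 : lam * (lam ^ (2*K+2) * a m) = lam ^ (2*K) * (lam^3 * a m) := by
          rw [pow_add]
          ring
        have h4 : lam ^ (2*K) * a p ≤ lam ^ (2*K) * (lam^3 * a m) := by
          rw [← h3]
          linarith
        have h5 : a p ≤ lam ^ 3 * a m := le_of_mul_le_mul_left h4 (pow_pos hl0 _)
        nlinarith [hpow 3]
      refine ⟨p, hpm, ?_, hlow, hup⟩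
      rcases eq_or_lt_of_le hpr with hpe | hplt
      · exact Or.inr (Or.inl (by rw [hpe]; exact hPr))
      · refine Or.inr (Or.inr ⟨r, hplt, hPr, ?_, ?_⟩)
        · intro i hpi hir
          exact hslow i (le_trans (le_of_lt hpm) hpi) hir
        · refine ⟨K', ?_, ?_⟩
          · have h15 : lam ^ (2*K) = lam * lam ^ (2*K'+1) := by
              rw [hK', show 2*(K'+1) = (2*K'+1)+1 by omega, pow_succ]
              ring
            rw [h15, mul_assoc] at hslot
            exact le_of_mul_le_mul_left hslot hl0
          · have h17 : 2*K'+2 = 2*K := by omega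
            rw [h17]
            exact hpQ

theorem wittmann_subsequence (a : ℕ → ℝ) (h1 : ∀ n, 1 ≤ a n) (hmono : Monotone a)
    (htop : Tendsto a atTop atTop) :
    ∀ lam : ℝ, 1 < lam →
      ∃ n : ℕ → ℕ, StrictMono n ∧ Tendsto n atTop atTop ∧
        ∀ k : ℕ, lam * a (n k) ≤ a (n (k + 1)) ∧ a (n (k + 1)) ≤ lam ^ 3 * a (n k + 1) := by
  classical
  intro lam hl
  have base : ∃ m0, WInv a lam m0 := by
    by_cases hex : ∃ r, lam * a r < a (r + 1)
    · obtain ⟨r, hr⟩ := hex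
      exact ⟨r, Or.inr (Or.inl hr)⟩
    · push_neg at hex
      exact ⟨0, Or.inl fun i _ => hex i⟩
  obtain ⟨m0, hm0⟩ := base
  choose f hf using wstep a h1 hmono htop lam hl
  let F : {m // WInv a lam m} → {m // WInv a lam m} := fun x => ⟨f x.1 x.2, (hf x.1 x.2).2.1⟩
  let seq : ℕ → {m // WInv a lam m} := fun k => F^[k] ⟨m0, hm0⟩
  have hsucc : ∀ k, seq (k+1) = F (seq k) := fun k => Function.iterate_succ_apply' F k _
  have hsm : StrictMono fun k => (seq k).1 := by
    apply strictMono_nat_of_lt_succ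
    intro k
    rw [hsucc k]
    exact (hf (seq k).1 (seq k).2).1
  refine ⟨fun k => (seq k).1, hsm, ?_, ?_⟩
  · exact tendsto_atTop_mono (fun n => hsm.le_apply) tendsto_id
  · intro k
    constructor
    · show lam * a ((seq k).1) ≤ a ((seq (k+1)).1)
      rw [hsucc k]
      exact (hf (seq k).1 (seq k).2).2.2.1
    · show a ((seq (k+1)).1) ≤ lam ^ 3 * a ((seq k).1 + 1)
      rw [hsucc k]
      exact (hf (seq k).1 (seq k).2).2.2.2
end

section
/- Let $(\Omega, \mathcal{H}, \mathbb{E})$ be a sub-linear expectation space, i.e., $\mathcal{H}$ is a linear space of functions on $\Omega$ closed under the required operations and $\mathbb{E} : \mathcal{H} \to \overline{\mathbb{R}}$ is monotone, constant-preserving, sub-additive and positively homogeneous. For $X \in \mathcal{H}$ and $c > 0$ write $X^{(c)} = (-c) \vee X \wedge c$, and let $\mathcal{H}_1 = \{X \in \mathcal{H} : \lim_{c,d\to\infty} \mathbb{E}[(|X| \wedge d - c)^+] = 0\}$ and $\breve{\mathbb{E}}[X] = \lim_{c\to\infty} \mathbb{E}[X^{(c)}]$ for $X \in \mathcal{H}_1$.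 If $X, Y \in \mathcal{H}_1$ and $Y$ is independent of $X$ under $\mathbb{E}$, then $\breve{\mathbb{E}}[X+Y] = \breve{\mathbb{E}}[X] + \breve{\mathbb{E}}[Y]$. -/
open Filter MeasureTheory

noncomputable section

/-- The class `C_{l,Lip}` of local Lipschitz functions with polynomial growth. -/
def ClLip {n : ℕ} (φ : (Fin n → ℝ) → ℝ) : Prop :=
  ∃ C : ℝ, 0 < C ∧ ∃ m : ℕ, ∀ x y : Fin n → ℝ,
    |φ x - φ y| ≤ C * (1 + ‖x‖ ^ m + ‖y‖ ^ m) * ‖x - y‖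

/-- A sub-linear expectation space `(Ω, H, E)` in the sense of Peng. -/
structure SLE (Ω : Type*) where
  H : Set (Ω → ℝ)
  E : (Ω → ℝ) → ℝ
  const_mem : ∀ c : ℝ, (fun _ => c) ∈ H
  comp_mem : ∀ (n : ℕ) (φ : (Fin n → ℝ) → ℝ), ClLip φ →
    ∀ X : Fin n → Ω → ℝ, (∀ i, X i ∈ H) → (fun ω => φ (fun i => X i ω)) ∈ H
  mono : ∀ X Y, X ∈ H → Y ∈ H → (∀ ω, X ω ≤ Y ω) → E X ≤ E Y
  isConst : ∀ c : ℝ, E (fun _ => c) = c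
  subadd : ∀ X Y, X ∈ H → Y ∈ H → E (fun ω => X ω + Y ω) ≤ E X + E Y
  poshom : ∀ c : ℝ, 0 < c → ∀ X, X ∈ H → E (fun ω => c * X ω) = c * E X

variable {Ω : Type*}

/-- The conjugate (lower) expectation. -/
def SLE.eps (S : SLE Ω) (X : Ω → ℝ) : ℝ := -S.E (fun ω => -X ω)

/-- `Y` (a `q`-vector) is independent of `X` (a `p`-vector) in Peng's sense. -/
def IndepVec (S : SLE Ω) {p q : ℕ} (X : Fin p → Ω → ℝ) (Y : Fin q → Ω → ℝ) : Prop :=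
  ∀ φ : (Fin p → ℝ) → (Fin q → ℝ) → ℝ,
    (∃ K : NNReal, LipschitzWith K (Function.uncurry φ)) →
    (∃ M : ℝ, ∀ x y, |φ x y| ≤ M) →
    S.E (fun ω => φ (fun i => X i ω) (fun j => Y j ω)) =
      S.E (fun ω => S.E (fun ω' => φ (fun i => X i ω) (fun j => Y j ω')))

/-- A sequence is independent if `X_{i+1}` is independent of `(X_0, …, X_i)`. -/
def IndepSeq (S : SLE Ω) (X : ℕ → Ω → ℝ) : Prop :=
  ∀ i : ℕ, IndepVec S (fun j : Fin (i + 1) => X j.val) (fun _ : Fin 1 => X (i + 1))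

/-- The upper capacity `V̂` generated by the sub-linear expectation. -/
def hatV (S : SLE Ω) (A : Set Ω) : ℝ :=
  sInf {r | ∃ ξ ∈ S.H, (∀ ω, Set.indicator A (fun _ => (1 : ℝ)) ω ≤ ξ ω) ∧ S.E ξ = r}

/-- The countably sub-additive extension `V*` of `V̂`. -/
def Vstar (S : SLE Ω) (A : Set Ω) : ℝ :=
  sInf {r | ∃ B : ℕ → Set Ω, (A ⊆ ⋃ n, B n) ∧
    Summable (fun n => hatV S (B n)) ∧ r = ∑' n, hatV S (B n)}

/-- Truncation `X^{(c)} = (-c) ∨ X ∧ c`. -/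
def trunc (c : ℝ) (X : Ω → ℝ) : Ω → ℝ := fun ω => max (-c) (min (X ω) c)

/-- Membership in `H₁ = {X ∈ H : lim_{c,d→∞} E[(|X| ∧ d - c)⁺] = 0}`. -/
def memH1 (S : SLE Ω) (X : Ω → ℝ) : Prop :=
  X ∈ S.H ∧
    Tendsto (fun cd : ℝ × ℝ => S.E (fun ω => max (min |X ω| cd.2 - cd.1) 0))
      (atTop ×ˢ atTop) (nhds 0)

/-- Two real random variables are identically distributed (Peng's sense). -/
def IdentDist1 (S : SLE Ω) (A B : Ω → ℝ) : Prop :=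
  ∀ φ : ℝ → ℝ, (∃ K : NNReal, LipschitzWith K φ) → (∃ M : ℝ, ∀ x, |φ x| ≤ M) →
    S.E (fun ω => φ (A ω)) = S.E (fun ω => φ (B ω))

/-- `m`-dependence: `(X_{n+m+1}, …, X_{n+j})` is independent of `(X_1, …, X_n)`
(indices here are 0-based: `X 0` plays the role of `X_1`). -/
def MDep (S : SLE Ω) (m : ℕ) (X : ℕ → Ω → ℝ) : Prop :=
  ∀ n : ℕ, 1 ≤ n → ∀ j : ℕ, m + 1 ≤ j →
    IndepVec S (fun i : Fin n => X i.val) (fun i : Fin (j - m) => X (n + m + i.val))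

/-- Linear stationarity: `X_1 + ⋯ + X_n ≐ X_{1+p} + ⋯ + X_{n+p}`. -/
def LinStat (S : SLE Ω) (X : ℕ → Ω → ℝ) : Prop :=
  ∀ n : ℕ, 1 ≤ n → ∀ p : ℕ,
    IdentDist1 S (fun ω => ∑ i ∈ Finset.range n, X i ω)
      (fun ω => ∑ i ∈ Finset.range n, X (p + i) ω)

/-- Condition (CC): `E` is represented by a countable-dimensionally weakly
compact family `P` of probability measures. -/
def CC [MeasurableSpace Ω] (S : SLE Ω) (P : Set (Measure Ω)) : Prop :=
  P.Nonempty ∧ (∀ p ∈ P, IsProbabilityMeasure p) ∧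
  (∀ X ∈ S.H, (∃ M : ℝ, ∀ ω, |X ω| ≤ M) → S.E X = ⨆ p ∈ P, ∫ ω, X ω ∂p) ∧
  (∀ Y : ℕ → Ω → ℝ, (∀ n, Y n ∈ S.H ∧ ∃ M : ℝ, ∀ ω, |Y n ω| ≤ M) →
    ∀ p : ℕ → Measure Ω, (∀ n, p n ∈ P) →
      ∃ k : ℕ → ℕ, StrictMono k ∧ ∃ Q ∈ P,
        ∀ (d : ℕ) (φ : (Fin d → ℝ) → ℝ),
          (∃ K : NNReal, LipschitzWith K φ) → (∃ M : ℝ, ∀ x, |φ x| ≤ M) →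
          Tendsto (fun j => ∫ ω, φ (fun i : Fin d => Y i.val ω) ∂(p (k j))) atTop
            (nhds (∫ ω, φ (fun i : Fin d => Y i.val ω) ∂Q)))


/-- `Y` is independent of `X` in Peng's sense (scalar case). -/
def IndepPair (S : SLE Ω) (X Y : Ω → ℝ) : Prop :=
  ∀ φ : ℝ → ℝ → ℝ,
    (∃ K : NNReal, LipschitzWith K (Function.uncurry φ)) →
    (∃ M : ℝ, ∀ x y, |φ x y| ≤ M) →
    S.E (fun ω => φ (X ω) (Y ω)) = S.E (fun ω => S.E (fun ω' => φ (X ω) (Y ω')))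

private def cl (b u : ℝ) : ℝ := max (-b) (min u b)

private lemma cl_lipschitz (b : ℝ) : LipschitzWith 1 (cl b) :=
  (LipschitzWith.id.min_const b).const_max (-b)

private lemma cl_abs_le {b : ℝ} (hb : 0 ≤ b) (u : ℝ) : |cl b u| ≤ b := by
  rw [abs_le, cl]; constructor
  · exact le_max_left _ _
  · exact max_le (by linarith) (min_le_right _ _)

private lemma cl_lip (b u v : ℝ) : |cl b u - cl b v| ≤ |u - v| := by
  have := (cl_lipschitz b).dist_le_mul u v
  simpa [Real.dist_eq] using this

private lemma cl_eq_self {b u : ℝ} (h : |u| ≤ b) : cl b u = u := by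
  rw [abs_le] at h
  rw [cl, min_eq_left h.2, max_eq_right h.1]

private lemma cl_diff {b c : ℝ} (hc : 0 ≤ c) (hcb : c ≤ b) (u : ℝ) :
    |cl b u - cl c u| ≤ max (min |u| b - c) 0 := by
  rw [abs_le]
  constructor <;>
  · simp only [cl, max_def, min_def]
    split_ifs <;> rcases abs_cases u with ⟨h1, h2⟩ | ⟨h1, h2⟩ <;> linarith

private lemma cl_sub_self {c : ℝ} (hc : 0 ≤ c) (u : ℝ) :
    |u - cl c u| ≤ max (|u| - c) 0 := by
  rw [abs_le]
  constructor <;>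
  · simp only [cl, max_def, min_def]
    split_ifs <;> rcases abs_cases u with ⟨h1, h2⟩ | ⟨h1, h2⟩ <;> linarith

private lemma cl_add_diff {b : ℝ} (hb : 0 ≤ b) (x y : ℝ) :
    |cl b (x + y) - cl b x - cl b y| ≤
      (max (min |x| (2*b) - b/2) 0 + max (min |x| (2*b) - b/2) 0) +
      (max (min |y| (2*b) - b/2) 0 + max (min |y| (2*b) - b/2) 0) := by
  by_cases hx : |x| ≤ 2*b
  · by_cases hy : |y| ≤ 2*b
    · set u := cl (b/2) x with hu
      set v := cl (b/2) y with hv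
      have hub : |u| ≤ b/2 := cl_abs_le (by linarith) x
      have hvb : |v| ≤ b/2 := cl_abs_le (by linarith) y
      have huv : cl b (u + v) = u + v :=
        cl_eq_self ((abs_add_le _ _).trans (by linarith))
      have h1 : |cl b (x+y) - (u+v)| ≤ |x - u| + |y - v| := by
        calc |cl b (x+y) - (u+v)| = |cl b (x+y) - cl b (u+v)| := by rw [huv]
        _ ≤ |(x+y) - (u+v)| := cl_lip _ _ _
        _ ≤ |x - u| + |y - v| := by
            have : (x+y) - (u+v) = (x-u) + (y-v) := by ring
            rw [this]; exact abs_add_le _ _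
      have h2 : |x - u| ≤ max (|x| - b/2) 0 := cl_sub_self (by linarith) x
      have h3 : |y - v| ≤ max (|y| - b/2) 0 := cl_sub_self (by linarith) y
      have h4 : |cl b x - u| ≤ max (|x| - b/2) 0 := by
        refine (cl_diff (by linarith) (by linarith) x).trans ?_
        exact max_le_max (by simp [min_le_left]) le_rfl
      have h5 : |cl b y - v| ≤ max (|y| - b/2) 0 := by
        refine (cl_diff (by linarith) (by linarith) y).trans ?_
        exact max_le_max (by simp [min_le_left]) le_rfl
      have hminx : min |x| (2*b) = |x| := min_eq_left hx
      have hminy : min |y| (2*b) = |y| := min_eq_left hy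
      rw [hminx, hminy]
      have htriangle : |cl b (x+y) - cl b x - cl b y| ≤
          |cl b (x+y) - (u+v)| + |cl b x - u| + |cl b y - v| := by
        have e : cl b (x+y) - cl b x - cl b y
            = (cl b (x+y) - (u+v)) - (cl b x - u) - (cl b y - v) := by ring
        rw [e]
        calc |_ - _ - _| ≤ |(cl b (x+y) - (u+v)) - (cl b x - u)| + |cl b y - v| :=
              abs_sub _ _
          _ ≤ |cl b (x+y) - (u+v)| + |cl b x - u| + |cl b y - v| := by
              have := abs_sub (cl b (x+y) - (u+v)) (cl b x - u)
              linarith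
      linarith
    · have hy' : 2*b ≤ |y| := le_of_not_ge hy
      have hminy : min |y| (2*b) = 2*b := min_eq_right hy'
      have h1 := cl_abs_le hb (x+y)
      have h2 := cl_abs_le hb x
      have h3 := cl_abs_le hb y
      have h4 : (0:ℝ) ≤ max (min |x| (2*b) - b/2) 0 := le_max_right _ _
      have h5 : max (min |y| (2*b) - b/2) 0 = 3*b/2 := by
        rw [hminy, max_eq_left (by linarith)]; ring
      rw [abs_le] at h1 h2 h3 ⊢
      constructor <;> (rw [h5]; linarith)
  · have hx' : 2*b ≤ |x| := le_of_not_ge hx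
    have hminx : min |x| (2*b) = 2*b := min_eq_right hx'
    have h1 := cl_abs_le hb (x+y)
    have h2 := cl_abs_le hb x
    have h3 := cl_abs_le hb y
    have h4 : (0:ℝ) ≤ max (min |y| (2*b) - b/2) 0 := le_max_right _ _
    have h5 : max (min |x| (2*b) - b/2) 0 = 3*b/2 := by
      rw [hminx, max_eq_left (by linarith)]; ring
    rw [abs_le] at h1 h2 h3 ⊢
    constructor <;> (rw [h5]; linarith)


private lemma abs_lip : LipschitzWith 1 (fun x : ℝ => |x|) :=
  lipschitzWith_one_norm

private lemma gl (c d : ℝ) : LipschitzWith (1+0) (fun u : ℝ => max (min |u| d - c) 0) :=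
  ((abs_lip.min_const d).sub (LipschitzWith.const c)).max_const 0

private lemma mem_comp1 {Ω : Type*} (S : SLE Ω) {X : Ω → ℝ} (hX : X ∈ S.H) {φ : ℝ → ℝ}
    {K : NNReal} (hφ : LipschitzWith K φ) : (fun ω => φ (X ω)) ∈ S.H := by
  have h : ClLip (n := 1) (fun v => φ (v 0)) := by
    refine ⟨(K : ℝ) + 1, by positivity, 0, fun x y => ?_⟩
    have h1 : |φ (x 0) - φ (y 0)| ≤ (K : ℝ) * |x 0 - y 0| := by
      have := hφ.dist_le_mul (x 0) (y 0)
      simpa [Real.dist_eq] using this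
    have h2 : |x 0 - y 0| ≤ ‖x - y‖ := by
      simpa [Real.norm_eq_abs] using norm_le_pi_norm (x - y) 0
    have hK : (0:ℝ) ≤ K := K.coe_nonneg
    have h3 : (0:ℝ) ≤ ‖x - y‖ := norm_nonneg _
    have h4 : (0:ℝ) ≤ |x 0 - y 0| := abs_nonneg _
    simp only [pow_zero]
    nlinarith
  exact S.comp_mem 1 (fun v => φ (v 0)) h (fun _ => X) (fun _ => hX)

private lemma mem_comp2 {Ω : Type*} (S : SLE Ω) {X Y : Ω → ℝ} (hX : X ∈ S.H) (hY : Y ∈ S.H)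
    (φ : ℝ → ℝ → ℝ) {K : NNReal} (hφ : LipschitzWith K (Function.uncurry φ)) :
    (fun ω => φ (X ω) (Y ω)) ∈ S.H := by
  have h : ClLip (n := 2) (fun v => φ (v 0) (v 1)) := by
    refine ⟨(K : ℝ) + 1, by positivity, 0, fun x y => ?_⟩
    have h1 : |φ (x 0) (x 1) - φ (y 0) (y 1)| ≤ (K : ℝ) * dist ((x 0, x 1)) ((y 0, y 1)) := by
      have := hφ.dist_le_mul (x 0, x 1) (y 0, y 1)
      simpa [Real.dist_eq, Function.uncurry] using this
    have hd : dist ((x 0, x 1)) ((y 0, y 1)) ≤ ‖x - y‖ := by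
      rw [Prod.dist_eq]
      refine max_le ?_ ?_
      · have := norm_le_pi_norm (x - y) 0
        simpa [Real.dist_eq, Real.norm_eq_abs] using this
      · have := norm_le_pi_norm (x - y) 1
        simpa [Real.dist_eq, Real.norm_eq_abs] using this
    have hK : (0:ℝ) ≤ K := K.coe_nonneg
    have h3 : (0:ℝ) ≤ ‖x - y‖ := norm_nonneg _
    have h4 : (0:ℝ) ≤ dist ((x 0, x 1)) ((y 0, y 1)) := dist_nonneg
    simp only [pow_zero]
    nlinarith
  have h2 := S.comp_mem 2 (fun v => φ (v 0) (v 1)) h ![X, Y]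
    (fun i => by fin_cases i <;> simp [hX, hY])
  simpa using h2

private lemma add_mem {Ω : Type*} (S : SLE Ω) {X Y : Ω → ℝ} (hX : X ∈ S.H) (hY : Y ∈ S.H) :
    (fun ω => X ω + Y ω) ∈ S.H :=
  mem_comp2 S hX hY (fun a b => a + b)
    (K := 1 + 1) (LipschitzWith.prod_fst.add LipschitzWith.prod_snd)

private lemma E_le_add {Ω : Type*} (S : SLE Ω) {X Y Z : Ω → ℝ} (hX : X ∈ S.H) (hY : Y ∈ S.H)
    (hZ : Z ∈ S.H) (h : ∀ ω, X ω ≤ Y ω + Z ω) : S.E X ≤ S.E Y + S.E Z :=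
  (S.mono X _ hX (add_mem S hY hZ) h).trans (S.subadd Y Z hY hZ)

private lemma abs_E_sub_le {Ω : Type*} (S : SLE Ω) {X Y Z : Ω → ℝ} (hX : X ∈ S.H)
    (hY : Y ∈ S.H) (hZ : Z ∈ S.H) (h : ∀ ω, |X ω - Y ω| ≤ Z ω) :
    |S.E X - S.E Y| ≤ S.E Z := by
  rw [abs_le]
  constructor
  · have h1 : S.E Y ≤ S.E X + S.E Z := E_le_add S hY hX hZ fun ω => by
      have := (abs_le.1 (h ω)).1; linarith
    linarith
  · have h1 : S.E X ≤ S.E Y + S.E Z := E_le_add S hX hY hZ fun ω => by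
      have := (abs_le.1 (h ω)).2; linarith
    linarith

private lemma E_const_add {Ω : Type*} (S : SLE Ω) {Z : Ω → ℝ} (hZ : Z ∈ S.H) (c : ℝ) :
    S.E (fun ω => c + Z ω) = c + S.E Z := by
  apply le_antisymm
  · have := S.subadd (fun _ => c) Z (S.const_mem c) hZ
    simpa [S.isConst] using this
  · have h1 := S.subadd (fun ω => c + Z ω) (fun _ => -c)
      (add_mem S (S.const_mem c) hZ) (S.const_mem (-c))
    have h2 : (fun ω => (fun ω => c + Z ω) ω + (fun _ => -c) ω) = Z := by
      funext ω; simp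
    rw [h2, S.isConst] at h1
    linarith

private lemma E_add_const {Ω : Type*} (S : SLE Ω) {Z : Ω → ℝ} (hZ : Z ∈ S.H) (c : ℝ) :
    S.E (fun ω => Z ω + c) = S.E Z + c := by
  have h : (fun ω => Z ω + c) = fun ω => c + Z ω := by funext ω; ring
  rw [h, E_const_add S hZ, add_comm]

private lemma pair_bound {f : ℝ × ℝ → ℝ}
    (h : Tendsto f (atTop ×ˢ atTop) (nhds 0)) {ε : ℝ} (hε : 0 < ε) :
    ∃ N : ℝ, ∀ c d : ℝ, N ≤ c → N ≤ d → |f (c, d)| < ε := by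
  have h2 : ∀ᶠ p in (atTop ×ˢ atTop : Filter (ℝ × ℝ)), |f p| < ε := by
    have := Metric.tendsto_nhds.1 h ε hε
    simpa [Real.dist_eq] using this
  rw [Filter.eventually_prod_iff] at h2
  obtain ⟨pa, hpa, pb, hpb, hcomb⟩ := h2
  obtain ⟨Na, hNa⟩ := eventually_atTop.1 hpa
  obtain ⟨Nb, hNb⟩ := eventually_atTop.1 hpb
  exact ⟨max Na Nb, fun c d hc hd =>
    hcomb (hNa c ((le_max_left _ _).trans hc)) (hNb d ((le_max_right _ _).trans hd))⟩

private lemma exists_tendsto_of_cauchy {f : ℝ → ℝ}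
    (h : ∀ ε : ℝ, 0 < ε → ∃ N : ℝ, ∀ b c : ℝ, N ≤ b → N ≤ c → |f b - f c| < ε) :
    ∃ L, Tendsto f atTop (nhds L) := by
  have hseq : CauchySeq (fun n : ℕ => f n) := by
    rw [Metric.cauchySeq_iff]
    intro ε hε
    obtain ⟨N, hN⟩ := h ε hε
    refine ⟨⌈N⌉₊, fun m hm n hn => ?_⟩
    have hm' : N ≤ (m : ℝ) := (Nat.le_ceil N).trans (Nat.cast_le.2 hm)
    have hn' : N ≤ (n : ℝ) := (Nat.le_ceil N).trans (Nat.cast_le.2 hn)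
    simpa [Real.dist_eq] using hN m n hm' hn'
  obtain ⟨L, hL⟩ := cauchySeq_tendsto_of_complete hseq
  refine ⟨L, Metric.tendsto_atTop.2 fun ε hε => ?_⟩
  obtain ⟨N, hN⟩ := h (ε/2) (by linarith)
  obtain ⟨n0, hn0⟩ := Metric.tendsto_atTop.1 hL (ε/2) (by linarith)
  set n1 : ℕ := max n0 ⌈N⌉₊ with hn1
  refine ⟨max N n1, fun c hc => ?_⟩
  have hc1 : N ≤ c := (le_max_left _ _).trans hc
  have hn1N : N ≤ (n1 : ℝ) := (Nat.le_ceil N).trans (Nat.cast_le.2 (le_max_right _ _))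
  have h1 : |f c - f n1| < ε/2 := hN c n1 hc1 hn1N
  have h2 : dist (f n1) L < ε/2 := hn0 n1 (le_max_left _ _)
  rw [Real.dist_eq] at h2 ⊢
  calc |f c - L| ≤ |f c - f n1| + |f n1 - L| := abs_sub_le _ _ _
    _ < ε := by linarith


private lemma exists_lim_trunc (S : SLE Ω) {X : Ω → ℝ} (hX : memH1 S X) :
    ∃ L, Tendsto (fun c : ℝ => S.E (trunc c X)) atTop (nhds L) := by
  obtain ⟨hXH, hXt⟩ := hX
  have htr : ∀ c : ℝ, trunc c X ∈ S.H := fun c => mem_comp1 S hXH (cl_lipschitz c)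
  apply exists_tendsto_of_cauchy
  intro ε hε
  obtain ⟨N0, hN0⟩ := pair_bound hXt hε
  refine ⟨max N0 0, fun b c hb hc => ?_⟩
  have hb0 : (0:ℝ) ≤ b := (le_max_right _ _).trans hb
  have hc0 : (0:ℝ) ≤ c := (le_max_right _ _).trans hc
  have hbN : N0 ≤ b := (le_max_left _ _).trans hb
  have hcN : N0 ≤ c := (le_max_left _ _).trans hc
  have key : ∀ b c : ℝ, 0 ≤ c → c ≤ b → N0 ≤ b → N0 ≤ c →
      |S.E (trunc b X) - S.E (trunc c X)| < ε := by
    intro b c h0 hle hbN hcN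
    have hG : (fun ω => max (min |X ω| b - c) 0) ∈ S.H := mem_comp1 S hXH (gl c b)
    have hpt : ∀ ω, |trunc b X ω - trunc c X ω| ≤ max (min |X ω| b - c) 0 :=
      fun ω => cl_diff h0 hle (X ω)
    have h1 := abs_E_sub_le S (htr b) (htr c) hG hpt
    have h2 := hN0 c b hcN hbN
    exact lt_of_le_of_lt (h1.trans (le_abs_self _)) h2
  rcases le_total c b with hle | hle
  · exact key b c hc0 hle hbN hcN
  · rw [abs_sub_comm]
    exact key c b hb0 hle hcN hbN

/-- Lemma 3.7: additivity of the extended expectation over independent summands. -/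
theorem breve_add_of_indep (S : SLE Ω) (X Y : Ω → ℝ)
    (hX : memH1 S X) (hY : memH1 S Y) (hind : IndepPair S X Y) :
    ∃ eX eY eXY : ℝ,
      Tendsto (fun c : ℝ => S.E (trunc c X)) atTop (nhds eX) ∧
      Tendsto (fun c : ℝ => S.E (trunc c Y)) atTop (nhds eY) ∧
      Tendsto (fun c : ℝ => S.E (trunc c (fun ω => X ω + Y ω))) atTop (nhds eXY) ∧
      eXY = eX + eY := by
  obtain ⟨eX, hgX⟩ := exists_lim_trunc S hX
  obtain ⟨eY, hgY⟩ := exists_lim_trunc S hY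
  obtain ⟨hXH, hXt⟩ := hX
  obtain ⟨hYH, hYt⟩ := hY
  have htrX : ∀ c : ℝ, trunc c X ∈ S.H := fun c => mem_comp1 S hXH (cl_lipschitz c)
  have htrY : ∀ c : ℝ, trunc c Y ∈ S.H := fun c => mem_comp1 S hYH (cl_lipschitz c)
  have hXYH : (fun ω => X ω + Y ω) ∈ S.H := add_mem S hXH hYH
  have htrXY : ∀ c : ℝ, trunc c (fun ω => X ω + Y ω) ∈ S.H :=
    fun c => mem_comp1 S hXYH (cl_lipschitz c)
  refine ⟨eX, eY, eX + eY, hgX, hgY, ?_, rfl⟩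
  -- the error terms
  set Dx : ℝ → ℝ := fun b => S.E (fun ω => max (min |X ω| (2*b) - b/2) 0) with hDx_def
  set Dy : ℝ → ℝ := fun b => S.E (fun ω => max (min |Y ω| (2*b) - b/2) 0) with hDy_def
  have hpairt : Tendsto (fun b : ℝ => (b/2, 2*b)) atTop
      ((atTop : Filter ℝ) ×ˢ (atTop : Filter ℝ)) :=
    (tendsto_id.atTop_div_const (two_pos : (0:ℝ) < 2)).prodMk (tendsto_id.const_mul_atTop two_pos)
  have hDx0 : Tendsto Dx atTop (nhds 0) := hXt.comp hpairt
  have hDy0 : Tendsto Dy atTop (nhds 0) := hYt.comp hpairt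
  have hD0 : Tendsto (fun b => (Dx b + Dx b) + (Dy b + Dy b)) atTop (nhds 0) := by
    have := (hDx0.add hDx0).add (hDy0.add hDy0)
    simpa using this
  have hdelta : Tendsto (fun b => S.E (trunc b (fun ω => X ω + Y ω)) -
      (S.E (trunc b X) + S.E (trunc b Y))) atTop (nhds 0) := by
    refine squeeze_zero_norm' (a := fun b => (Dx b + Dx b) + (Dy b + Dy b)) ?_ hD0
    filter_upwards [eventually_ge_atTop (0:ℝ)] with b hb
    -- independence step
    have hiq := hind (fun x y => cl b x + cl b y)
      ⟨1*1 + 1*1, ((cl_lipschitz b).comp LipschitzWith.prod_fst).add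
        ((cl_lipschitz b).comp LipschitzWith.prod_snd)⟩
      ⟨2*b, fun x y => by
        have h1 := cl_abs_le hb x
        have h2 := cl_abs_le hb y
        calc |cl b x + cl b y| ≤ |cl b x| + |cl b y| := abs_add_le _ _
          _ ≤ 2*b := by linarith⟩
    have hin : (fun ω => S.E (fun ω' => cl b (X ω) + cl b (Y ω'))) =
        fun ω => cl b (X ω) + S.E (trunc b Y) :=
      funext fun ω => E_const_add S (htrY b) (cl b (X ω))
    rw [hin] at hiq
    have hout : S.E (fun ω => cl b (X ω) + S.E (trunc b Y)) =
        S.E (trunc b X) + S.E (trunc b Y) := E_add_const S (htrX b) (S.E (trunc b Y))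
    rw [hout] at hiq
    -- hiq : S.E (fun ω => cl b (X ω) + cl b (Y ω)) = S.E (trunc b X) + S.E (trunc b Y)
    have hAx : (fun ω => max (min |X ω| (2*b) - b/2) 0) ∈ S.H :=
      mem_comp1 S hXH (gl (b/2) (2*b))
    have hAy : (fun ω => max (min |Y ω| (2*b) - b/2) 0) ∈ S.H :=
      mem_comp1 S hYH (gl (b/2) (2*b))
    have hZmem : (fun ω => (max (min |X ω| (2*b) - b/2) 0 + max (min |X ω| (2*b) - b/2) 0) +
        (max (min |Y ω| (2*b) - b/2) 0 + max (min |Y ω| (2*b) - b/2) 0)) ∈ S.H :=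
      add_mem S (add_mem S hAx hAx) (add_mem S hAy hAy)
    have hsummem : (fun ω => cl b (X ω) + cl b (Y ω)) ∈ S.H := add_mem S (htrX b) (htrY b)
    have hpt : ∀ ω, |trunc b (fun ω => X ω + Y ω) ω - (cl b (X ω) + cl b (Y ω))| ≤
        (max (min |X ω| (2*b) - b/2) 0 + max (min |X ω| (2*b) - b/2) 0) +
        (max (min |Y ω| (2*b) - b/2) 0 + max (min |Y ω| (2*b) - b/2) 0) := by
      intro ω
      have := cl_add_diff hb (X ω) (Y ω)
      have he : cl b (X ω + Y ω) - cl b (X ω) - cl b (Y ω) =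
          cl b (X ω + Y ω) - (cl b (X ω) + cl b (Y ω)) := by ring
      rw [he] at this
      exact this
    have habs := abs_E_sub_le S (htrXY b) hsummem hZmem hpt
    have hEZ : S.E (fun ω => (max (min |X ω| (2*b) - b/2) 0 + max (min |X ω| (2*b) - b/2) 0) +
        (max (min |Y ω| (2*b) - b/2) 0 + max (min |Y ω| (2*b) - b/2) 0)) ≤
        (Dx b + Dx b) + (Dy b + Dy b) := by
      have e1 := S.subadd _ _ (add_mem S hAx hAx) (add_mem S hAy hAy)
      have e2 := S.subadd _ _ hAx hAx
      have e3 := S.subadd _ _ hAy hAy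
      simp only [hDx_def, hDy_def]
      linarith
    rw [Real.norm_eq_abs, ← hiq]
    exact habs.trans hEZ
  have := hdelta.add (hgX.add hgY)
  simpa using this

end
end

section
/- For any real numbers $X$, $Y$, and $b > 0$, with the truncation $z^{(b)} := (-b) \vee z \wedge b$, one has $\big|(X+Y)^{(b)} - (X^{(b)} + Y^{(b)})\big| \le 2\big((|X| - b/2)^+ + (|Y| - b/2)^+\big) \wedge (3b)$. -/
lemma trunc_dist (z b : ℝ) (hb : 0 < b) :
    |max (-b) (min z b) - z| ≤ max (|z| - b) 0 := by
  rcases le_total z b with h1 | h1 <;> rcases le_total (-b) z with h2 | h2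
  · rw [min_eq_left h1, max_eq_right h2, sub_self, abs_zero]
    exact le_max_right _ _
  · rw [min_eq_left h1, max_eq_left (by linarith), abs_of_nonneg (by linarith),
      abs_of_nonpos (by linarith : z ≤ 0)]
    exact le_trans (by linarith) (le_max_left _ _)
  · rw [min_eq_right h1, max_eq_right (by linarith), abs_of_nonpos (by linarith),
      abs_of_nonneg (by linarith : (0:ℝ) ≤ z)]
    exact le_trans (by linarith) (le_max_left _ _)
  · linarith

theorem truncation_sum_inequality (X Y b : ℝ) (hb : 0 < b) :
    |max (-b) (min (X + Y) b) - (max (-b) (min X b) + max (-b) (min Y b))| ≤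
      min (2 * (max (|X| - b / 2) 0 + max (|Y| - b / 2) 0)) (3 * b) := by
  have hx := trunc_dist X b hb
  have hy := trunc_dist Y b hb
  have hxy := trunc_dist (X + Y) b hb
  have key : |max (-b) (min (X + Y) b) - (max (-b) (min X b) + max (-b) (min Y b))| ≤
      max (|X + Y| - b) 0 + max (|X| - b) 0 + max (|Y| - b) 0 := by
    have : max (-b) (min (X + Y) b) - (max (-b) (min X b) + max (-b) (min Y b)) =
        (max (-b) (min (X + Y) b) - (X + Y)) - (max (-b) (min X b) - X)
          - (max (-b) (min Y b) - Y) := by ring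
    rw [this]
    calc |_ - _ - _| ≤ |(max (-b) (min (X + Y) b) - (X + Y)) - (max (-b) (min X b) - X)|
          + |max (-b) (min Y b) - Y| := abs_sub _ _
      _ ≤ |max (-b) (min (X + Y) b) - (X + Y)| + |max (-b) (min X b) - X|
          + |max (-b) (min Y b) - Y| := by gcongr; exact abs_sub _ _
      _ ≤ _ := by gcongr
  rw [le_min_iff]
  constructor
  · refine key.trans ?_
    have h1 : max (|X + Y| - b) 0 ≤ max (|X| - b/2) 0 + max (|Y| - b/2) 0 := by
      apply max_le
      · have := abs_add_le X Y
        have := le_max_left (|X| - b/2) (0:ℝ)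
        have := le_max_left (|Y| - b/2) (0:ℝ)
        linarith
      · exact add_nonneg (le_max_right _ _) (le_max_right _ _)
    have h2 : max (|X| - b) 0 ≤ max (|X| - b/2) 0 := by
      apply max_le_max _ le_rfl; linarith
    have h3 : max (|Y| - b) 0 ≤ max (|Y| - b/2) 0 := by
      apply max_le_max _ le_rfl; linarith
    linarith
  · have b1 : |max (-b) (min (X + Y) b)| ≤ b := by
      rw [abs_le]; constructor
      · exact le_max_left _ _
      · exact max_le (by linarith) (min_le_right _ _)
    have b2 : |max (-b) (min X b)| ≤ b := by
      rw [abs_le]; exact ⟨le_max_left _ _, max_le (by linarith) (min_le_right _ _)⟩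
    have b3 : |max (-b) (min Y b)| ≤ b := by
      rw [abs_le]; exact ⟨le_max_left _ _, max_le (by linarith) (min_le_right _ _)⟩
    calc |_| ≤ |max (-b) (min (X + Y) b)| + |max (-b) (min X b) + max (-b) (min Y b)| :=
          abs_sub _ _
      _ ≤ |max (-b) (min (X + Y) b)| + (|max (-b) (min X b)| + |max (-b) (min Y b)|) := by
          gcongr; exact abs_add_le _ _
      _ ≤ 3 * b := by linarith
end

section
/- Let $(\Omega, \mathcal{H}, \mathbb{E})$ be a sub-linear expectation space and let $\mathcal{H}_1 = \{X \in \mathcal{H} : \lim_{c,d\to\infty} \mathbb{E}[(|X| \wedge d - c)^+] = 0\}$. Then for every $X \in \mathcal{H}_1$ the limit $\breve{\mathbb{E}}[X] = \lim_{c\to\infty} \mathbb{E}[(-c) \vee X \wedge c]$ exists in $\mathbb{R}$, and $(\Omega, \mathcal{H}_1, \breve{\mathbb{E}})$ is itself a sub-linear expectation space: $\mathcal{H}_1$ is a linear subspace, and $\breve{\mathbb{E}}$ is monotone, constant-preserving, sub-additive and positively homogeneous on $\mathcal{H}_1$. -/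
open Filter MeasureTheory

noncomputable section

variable {Ω : Type*}

/-- The extended sub-linear expectation `Ĕ[X] = lim_{c→∞} E[X^{(c)}]`. -/
def brE (S : SLE Ω) (X : Ω → ℝ) : ℝ := limUnder atTop (fun c : ℝ => S.E (trunc c X))

/- ---------- auxiliary pointwise real lemmas ---------- -/

lemma P_trunc_abs {x d : ℝ} (hd : 0 ≤ d) : |max (-d) (min x d)| = min |x| d := by
  rcases abs_cases (max (-d) (min x d)) with ⟨e1,e2⟩|⟨e1,e2⟩ <;>
    rcases abs_cases x with ⟨f1,f2⟩|⟨f1,f2⟩ <;>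
    rw [e1, f1] <;> simp only [max_def, min_def] at * <;> split_ifs at * <;> linarith

lemma P_sub_trunc {x c : ℝ} (hc : 0 ≤ c) :
    |x - max (-c) (min x c)| = max (|x| - c) 0 := by
  rcases abs_cases (x - max (-c) (min x c)) with ⟨e1,e2⟩|⟨e1,e2⟩ <;>
    rcases abs_cases x with ⟨f1,f2⟩|⟨f1,f2⟩ <;>
    rw [e1, f1] <;> simp only [max_def, min_def] at * <;> split_ifs at * <;> linarith

lemma P_trunc_trunc {x c d : ℝ} (hc : 0 ≤ c) (hcd : c ≤ d) :
    max (-c) (min (max (-d) (min x d)) c) = max (-c) (min x c) := by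
  simp only [max_def, min_def]; split_ifs <;> linarith

lemma P_abs_trunc_le {x c : ℝ} (hc : 0 ≤ c) : |max (-c) (min x c)| ≤ c := by
  rw [abs_le]; constructor <;> simp only [max_def, min_def] <;> split_ifs <;> linarith

lemma P2' {u v w c d : ℝ} (hw : w ≤ u + v) (hu : 0 ≤ u) (hv : 0 ≤ v) (hc : 0 ≤ c) :
    max (min w d - c) 0 ≤ max (min u d - c/2) 0 + max (min v d - c/2) 0 := by
  simp only [max_def, min_def]; split_ifs <;> linarith

lemma P5 {k u e f : ℝ} (hk : 0 < k) :
    k * max (min u e - f) 0 = max (min (k*u) (k*e) - k*f) 0 := by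
  simp only [max_def, min_def]; split_ifs <;> nlinarith

lemma P4 {k x e : ℝ} (hk : 0 < k) :
    k * max (-e) (min x e) = max (-(k*e)) (min (k*x) (k*e)) := by
  simp only [max_def, min_def]; split_ifs <;> nlinarith

lemma P_mono {x y c : ℝ} (h : x ≤ y) :
    max (-c) (min x c) ≤ max (-c) (min y c) :=
  max_le_max le_rfl (min_le_min h le_rfl)

lemma P_min_plus {s c : ℝ} (hc : 0 ≤ c) :
    max (min s (2*c) - c/2) 0 = min (max (s - c/2) 0) (3*c/2) := by
  simp only [max_def, min_def]; split_ifs <;> linarith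

lemma P_plus_subadd {s t c : ℝ} : max (s + t - c) 0 ≤ max (s - c/2) 0 + max (t - c/2) 0 := by
  simp only [max_def]; split_ifs <;> linarith

lemma P3 {x y c : ℝ} (hc : 0 ≤ c) :
    |max (-c) (min (x+y) c) - max (-c) (min x c) - max (-c) (min y c)| ≤
      2 * max (min |x| (2*c) - c/2) 0 + 2 * max (min |y| (2*c) - c/2) 0 := by
  set u := max (|x| - c/2) 0 with hu
  set v := max (|y| - c/2) 0 with hv
  have hu0 : 0 ≤ u := le_max_right _ _
  have hv0 : 0 ≤ v := le_max_right _ _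
  have hA : |x + y - max (-c) (min (x+y) c)| = max (|x+y| - c) 0 := P_sub_trunc hc
  have hB : |x - max (-c) (min x c)| = max (|x| - c) 0 := P_sub_trunc hc
  have hC : |y - max (-c) (min y c)| = max (|y| - c) 0 := P_sub_trunc hc
  have h1 : max (|x+y| - c) 0 ≤ u + v := by
    have h2 : max (|x+y| - c) 0 ≤ max (|x| + |y| - c) 0 :=
      max_le_max (by linarith [abs_add_le x y]) le_rfl
    exact h2.trans P_plus_subadd
  have hBu : max (|x| - c) 0 ≤ u := max_le_max (by linarith) le_rfl
  have hCv : max (|y| - c) 0 ≤ v := max_le_max (by linarith) le_rfl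
  have key1 : |max (-c) (min (x+y) c) - max (-c) (min x c) - max (-c) (min y c)| ≤
      2*u + 2*v := by
    have hfe : max (-c) (min (x+y) c) - max (-c) (min x c) - max (-c) (min y c) =
        -(x + y - max (-c) (min (x+y) c)) + (x - max (-c) (min x c)) +
          (y - max (-c) (min y c)) := by ring
    rw [hfe]
    calc |_ + (y - max (-c) (min y c))| ≤
        |(-(x + y - max (-c) (min (x+y) c)) + (x - max (-c) (min x c)))| +
          |y - max (-c) (min y c)| := abs_add_le _ _
      _ ≤ |(-(x + y - max (-c) (min (x+y) c)))| + |x - max (-c) (min x c)| +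
          |y - max (-c) (min y c)| := by gcongr; exact abs_add_le _ _
      _ ≤ 2*u + 2*v := by rw [abs_neg, hA, hB, hC]; linarith
  have key2 : |max (-c) (min (x+y) c) - max (-c) (min x c) - max (-c) (min y c)| ≤ 3*c := by
    have a1 := P_abs_trunc_le (x := x+y) hc
    have a2 := P_abs_trunc_le (x := x) hc
    have a3 := P_abs_trunc_le (x := y) hc
    calc |max (-c) (min (x+y) c) - max (-c) (min x c) - max (-c) (min y c)|
        ≤ |max (-c) (min (x+y) c) - max (-c) (min x c)| + |max (-c) (min y c)| :=
          abs_sub _ _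
      _ ≤ |max (-c) (min (x+y) c)| + |max (-c) (min x c)| + |max (-c) (min y c)| := by
          have := abs_sub (max (-c) (min (x+y) c)) (max (-c) (min x c)); linarith
      _ ≤ 3*c := by linarith
  rw [P_min_plus hc, P_min_plus hc, ← hu, ← hv]
  rcases le_total u (3*c/2) with h|h <;> rcases le_total v (3*c/2) with h'|h'
  · rw [min_eq_left h, min_eq_left h']; linarith
  · rw [min_eq_left h, min_eq_right h']; linarith
  · rw [min_eq_right h, min_eq_left h']; linarith
  · rw [min_eq_right h, min_eq_right h']; linarith

/- ---------- membership lemmas ---------- -/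

lemma clLip_of_lip {n : ℕ} {φ : (Fin n → ℝ) → ℝ} {K : NNReal}
    (h : LipschitzWith K φ) : ClLip φ := by
  refine ⟨K + 1, by positivity, 0, fun x y => ?_⟩
  have h1 : |φ x - φ y| ≤ K * ‖x - y‖ := by
    simpa [Real.dist_eq, dist_eq_norm] using h.dist_le_mul x y
  have h2 : (0:ℝ) ≤ ‖x - y‖ := norm_nonneg _
  have h3 : (0:ℝ) ≤ (K:ℝ) := K.2
  calc |φ x - φ y| ≤ K * ‖x - y‖ := h1
    _ ≤ (K + 1) * (1 + ‖x‖ ^ 0 + ‖y‖ ^ 0) * ‖x - y‖ := by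
        simp only [pow_zero]; nlinarith

lemma mem1 (S : SLE Ω) {f : ℝ → ℝ} {K : NNReal} (hf : LipschitzWith K f)
    {X : Ω → ℝ} (hX : X ∈ S.H) : (fun ω => f (X ω)) ∈ S.H := by
  have h : LipschitzWith K (fun x : Fin 1 → ℝ => f (x 0)) := by
    intro x y
    exact (hf (x 0) (y 0)).trans (by
      exact mul_le_mul_right (edist_le_pi_edist x y 0) K)
  exact S.comp_mem 1 _ (clLip_of_lip h) (fun _ => X) (fun _ => hX)

lemma addH_mem (S : SLE Ω) {X Y : Ω → ℝ} (hX : X ∈ S.H) (hY : Y ∈ S.H) :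
    (fun ω => X ω + Y ω) ∈ S.H := by
  have h : LipschitzWith 2 (fun x : Fin 2 → ℝ => x 0 + x 1) := by
    apply LipschitzWith.of_dist_le_mul
    intro x y
    have h0 : dist (x 0) (y 0) ≤ dist x y := dist_le_pi_dist x y 0
    have h1 : dist (x 1) (y 1) ≤ dist x y := dist_le_pi_dist x y 1
    have := dist_add_add_le (x 0) (x 1) (y 0) (y 1)
    push_cast
    linarith
  have := S.comp_mem 2 _ (clLip_of_lip h) ![X, Y] (by
    intro i; fin_cases i <;> simpa)
  simpa using this

lemma smulH_mem (S : SLE Ω) (c : ℝ) {X : Ω → ℝ} (hX : X ∈ S.H) :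
    (fun ω => c * X ω) ∈ S.H := by
  refine mem1 S (K := Real.nnabs c) (f := fun x => c * x) ?_ hX
  exact LipschitzWith.of_dist_le_mul fun x y => by
    rw [Real.dist_eq, Real.dist_eq, ← mul_sub, abs_mul]
    exact mul_le_mul_of_nonneg_right
      (by simp [Real.coe_nnabs] : |c| ≤ ((Real.nnabs c : NNReal) : ℝ)) (abs_nonneg _)

lemma trunc_mem (S : SLE Ω) (c : ℝ) {X : Ω → ℝ} (hX : X ∈ S.H) :
    trunc c X ∈ S.H := by
  refine mem1 S (K := 1) (f := fun x => max (-c) (min x c)) ?_ hX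
  exact (LipschitzWith.id.min_const c).const_max (-c)

lemma tail_mem (S : SLE Ω) (c d : ℝ) {X : Ω → ℝ} (hX : X ∈ S.H) :
    (fun ω => max (min |X ω| d - c) 0) ∈ S.H := by
  refine mem1 S (K := 1) (f := fun x => max (min |x| d - c) 0) ?_ hX
  have h0 : LipschitzWith 1 (fun x : ℝ => |x|) := lipschitzWith_one_norm
  have hsub : LipschitzWith 1 (fun x : ℝ => x - c) :=
    LipschitzWith.of_dist_le_mul fun x y => by
      rw [Real.dist_eq, Real.dist_eq]; push_cast; ring_nf; simp
  simpa using ((hsub.comp (h0.min_const d)).max_const 0)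

lemma subH_mem (S : SLE Ω) {X Y : Ω → ℝ} (hX : X ∈ S.H) (hY : Y ∈ S.H) :
    (fun ω => X ω - Y ω) ∈ S.H := by
  have := addH_mem S hX (smulH_mem S (-1) hY)
  simpa [sub_eq_add_neg] using this

/- ---------- expectation-level lemmas ---------- -/

lemma E_nonneg (S : SLE Ω) {X : Ω → ℝ} (hX : X ∈ S.H) (h : ∀ ω, 0 ≤ X ω) :
    0 ≤ S.E X := by
  have := S.mono _ _ (S.const_mem 0) hX h
  simpa [S.isConst 0] using this

lemma E_abs_sub_le (S : SLE Ω) {a b g : Ω → ℝ} (ha : a ∈ S.H) (hb : b ∈ S.H)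
    (hg : g ∈ S.H) (h : ∀ ω, |a ω - b ω| ≤ g ω) : |S.E a - S.E b| ≤ S.E g := by
  have hab : (fun ω => a ω - b ω) ∈ S.H := subH_mem S ha hb
  have hba : (fun ω => b ω - a ω) ∈ S.H := subH_mem S hb ha
  have h1 : S.E a ≤ S.E b + S.E g := by
    have e1 : S.E a = S.E (fun ω => b ω + (a ω - b ω)) := by
      congr 1; funext ω; ring
    rw [e1]
    refine (S.subadd _ _ hb hab).trans ?_
    have : S.E (fun ω => a ω - b ω) ≤ S.E g :=
      S.mono _ _ hab hg fun ω => (le_abs_self _).trans (h ω)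
    linarith
  have h2 : S.E b ≤ S.E a + S.E g := by
    have e1 : S.E b = S.E (fun ω => a ω + (b ω - a ω)) := by
      congr 1; funext ω; ring
    rw [e1]
    refine (S.subadd _ _ ha hba).trans ?_
    have : S.E (fun ω => b ω - a ω) ≤ S.E g := by
      refine S.mono _ _ hba hg fun ω => ?_
      have := h ω; have := neg_abs_le (a ω - b ω); linarith
    linarith
  rw [abs_le]; constructor <;> linarith

lemma exists_tendsto_of_cauchy_atTop {g : ℝ → ℝ}
    (h : ∀ ε > (0:ℝ), ∃ N : ℝ, ∀ c d : ℝ, N ≤ c → N ≤ d → |g d - g c| < ε) :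
    ∃ e : ℝ, Tendsto g atTop (nhds e) := by
  have hcs : CauchySeq (fun n : ℕ => g n) := by
    rw [Metric.cauchySeq_iff]
    intro ε hε
    obtain ⟨N, hN⟩ := h ε hε
    refine ⟨⌈N⌉₊, fun m hm n hn => ?_⟩
    have h1 : N ≤ (m:ℝ) := (Nat.ceil_le.mp hm)
    have h2 : N ≤ (n:ℝ) := (Nat.ceil_le.mp hn)
    simpa [Real.dist_eq] using hN n m h2 h1
  obtain ⟨e, he⟩ := cauchySeq_tendsto_of_complete hcs
  refine ⟨e, Metric.tendsto_atTop.mpr fun ε hε => ?_⟩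
  obtain ⟨N, hN⟩ := h (ε/2) (by linarith)
  obtain ⟨N2, hN2⟩ := (Metric.tendsto_atTop.mp he) (ε/2) (by linarith)
  set n := max ⌈N⌉₊ N2 with hn
  refine ⟨N, fun c hc => ?_⟩
  have hna : dist (g n) e < ε/2 := hN2 n (le_max_right _ _)
  have hnN : N ≤ (n:ℝ) := Nat.ceil_le.mp (le_max_left _ _)
  have h3 : |g (n:ℝ) - g c| < ε/2 := hN c n hc hnN
  calc dist (g c) e ≤ dist (g c) (g (n:ℝ)) + dist (g (n:ℝ)) e := dist_triangle _ _ _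
    _ < ε/2 + ε/2 := by
        apply add_lt_add _ hna
        rw [Real.dist_eq, abs_sub_comm]; exact h3
    _ = ε := by ring

lemma tail_small (S : SLE Ω) {X : Ω → ℝ} (hX : memH1 S X) {ε : ℝ} (hε : 0 < ε) :
    ∃ N : ℝ, 0 ≤ N ∧ ∀ c d : ℝ, N ≤ c → N ≤ d →
      S.E (fun ω => max (min |X ω| d - c) 0) < ε := by
  have h := Metric.tendsto_nhds.mp hX.2 ε hε
  rw [prod_atTop_atTop_eq] at h
  obtain ⟨a, ha⟩ := eventually_atTop.mp h
  refine ⟨max (max a.1 a.2) 0, le_max_right _ _, fun c d hc hd => ?_⟩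
  have h1 : a.1 ≤ c := le_trans ((le_max_left _ _).trans (le_max_left _ _)) hc
  have h2 : a.2 ≤ d := le_trans ((le_max_right _ _).trans (le_max_left _ _)) hd
  have := ha (c, d) (Prod.le_def.mpr ⟨h1, h2⟩)
  rw [Real.dist_eq, sub_zero] at this
  exact (le_abs_self _).trans_lt this

lemma trunc_diff_le (S : SLE Ω) {X : Ω → ℝ} (hX : X ∈ S.H) {c d : ℝ}
    (hc : 0 ≤ c) (hcd : c ≤ d) :
    |S.E (trunc d X) - S.E (trunc c X)| ≤
      S.E (fun ω => max (min |X ω| d - c) 0) := by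
  apply E_abs_sub_le S (trunc_mem S d hX) (trunc_mem S c hX) (tail_mem S c d hX)
  intro ω
  have e1 : max (-c) (min (X ω) c) = max (-c) (min (max (-d) (min (X ω) d)) c) :=
    (P_trunc_trunc hc hcd).symm
  have e2 : |max (-d) (min (X ω) d) - max (-c) (min (max (-d) (min (X ω) d)) c)|
      = max (|max (-d) (min (X ω) d)| - c) 0 := P_sub_trunc hc
  have e3 : |max (-d) (min (X ω) d)| = min |X ω| d := P_trunc_abs (hc.trans hcd)
  show |trunc d X ω - trunc c X ω| ≤ _
  simp only [trunc]
  rw [e1, e2, e3]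

lemma H1_lim (S : SLE Ω) {X : Ω → ℝ} (hX : memH1 S X) :
    ∃ e, Tendsto (fun c : ℝ => S.E (trunc c X)) atTop (nhds e) := by
  apply exists_tendsto_of_cauchy_atTop
  intro ε hε
  obtain ⟨N, hN0, hN⟩ := tail_small S hX hε
  refine ⟨N, fun c d hc hd => ?_⟩
  rcases le_total c d with h | h
  · exact lt_of_le_of_lt (trunc_diff_le S hX.1 (hN0.trans hc) h) (hN c d hc hd)
  · rw [abs_sub_comm]
    exact lt_of_le_of_lt (trunc_diff_le S hX.1 (hN0.trans hd) h) (hN d c hd hc)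


lemma zero_memH1 (S : SLE Ω) : memH1 S (fun _ => (0 : ℝ)) := by
  refine ⟨S.const_mem 0, ?_⟩
  have hev : (fun cd : ℝ × ℝ =>
      S.E (fun _ : Ω => max (min |(0:ℝ)| cd.2 - cd.1) 0)) =ᶠ[atTop ×ˢ atTop]
      (fun _ => (0:ℝ)) := by
    rw [prod_atTop_atTop_eq]
    filter_upwards [eventually_ge_atTop ((0:ℝ), (0:ℝ))] with cd hcd
    obtain ⟨h1, h2⟩ : (0:ℝ) ≤ cd.1 ∧ (0:ℝ) ≤ cd.2 := hcd
    have he : (fun _ : Ω => max (min |(0:ℝ)| cd.2 - cd.1) 0) = fun _ : Ω => (0:ℝ) := by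
      funext ω
      rw [abs_zero, min_eq_left h2, zero_sub, max_eq_right (by linarith)]
    rw [he, S.isConst]
  exact Tendsto.congr' hev.symm tendsto_const_nhds

lemma smul_memH1 (S : SLE Ω) (c : ℝ) {X : Ω → ℝ} (hX : memH1 S X) :
    memH1 S (fun ω => c * X ω) := by
  rcases eq_or_ne c 0 with rfl | hc
  · have : (fun ω : Ω => (0:ℝ) * X ω) = fun _ => (0:ℝ) := by funext ω; ring
    rw [this]; exact zero_memH1 S
  have hk : (0:ℝ) < |c| := abs_pos.mpr hc
  refine ⟨smulH_mem S c hX.1, ?_⟩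
  have hfe : ∀ cd : ℝ × ℝ,
      S.E (fun ω => max (min |c * X ω| cd.2 - cd.1) 0) =
        |c| * S.E (fun ω => max (min |X ω| (cd.2/|c|) - cd.1/|c|) 0) := by
    intro cd
    rw [← S.poshom |c| hk _ (tail_mem S (cd.1/|c|) (cd.2/|c|) hX.1)]
    congr 1; funext ω
    rw [P5 hk, abs_mul, mul_div_cancel₀ _ (ne_of_gt hk), mul_div_cancel₀ _ (ne_of_gt hk)]
  have hm : Tendsto (fun cd : ℝ × ℝ => (cd.1/|c|, cd.2/|c|))
      (atTop ×ˢ atTop) (atTop ×ˢ atTop) :=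
    (tendsto_fst.atTop_div_const hk).prodMk (tendsto_snd.atTop_div_const hk)
  have h0 : Tendsto (fun cd : ℝ × ℝ =>
      |c| * S.E (fun ω => max (min |X ω| (cd.2/|c|) - cd.1/|c|) 0))
      (atTop ×ˢ atTop) (nhds (|c| * 0)) := (hX.2.comp hm).const_mul _
  rw [mul_zero] at h0
  exact h0.congr fun cd => (hfe cd).symm

lemma add_memH1 (S : SLE Ω) {X Y : Ω → ℝ} (hX : memH1 S X) (hY : memH1 S Y) :
    memH1 S (fun ω => X ω + Y ω) := by
  refine ⟨addH_mem S hX.1 hY.1, ?_⟩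
  have hm : Tendsto (fun cd : ℝ × ℝ => (cd.1/2, cd.2))
      (atTop ×ˢ atTop) (atTop ×ˢ atTop) :=
    (tendsto_fst.atTop_div_const two_pos).prodMk tendsto_snd
  have hgX : Tendsto (fun cd : ℝ × ℝ =>
      S.E (fun ω => max (min |X ω| cd.2 - cd.1/2) 0)) (atTop ×ˢ atTop) (nhds 0) :=
    hX.2.comp hm
  have hgY : Tendsto (fun cd : ℝ × ℝ =>
      S.E (fun ω => max (min |Y ω| cd.2 - cd.1/2) 0)) (atTop ×ˢ atTop) (nhds 0) :=
    hY.2.comp hm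
  have hg0 : Tendsto (fun cd : ℝ × ℝ =>
      S.E (fun ω => max (min |X ω| cd.2 - cd.1/2) 0) +
        S.E (fun ω => max (min |Y ω| cd.2 - cd.1/2) 0)) (atTop ×ˢ atTop) (nhds 0) := by
    have := hgX.add hgY; simpa using this
  refine squeeze_zero' ?_ ?_ hg0
  · exact Eventually.of_forall fun cd =>
      E_nonneg S (tail_mem S cd.1 cd.2 (addH_mem S hX.1 hY.1))
        (fun ω => le_max_right _ _)
  · rw [prod_atTop_atTop_eq]
    filter_upwards [eventually_ge_atTop ((0:ℝ), (0:ℝ))] with cd hcd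
    obtain ⟨h1, _⟩ := Prod.le_def.mp hcd
    have hstep : S.E (fun ω => max (min |X ω + Y ω| cd.2 - cd.1) 0) ≤
        S.E (fun ω => max (min |X ω| cd.2 - cd.1/2) 0 +
          max (min |Y ω| cd.2 - cd.1/2) 0) := by
      refine S.mono _ _ (tail_mem S cd.1 cd.2 (addH_mem S hX.1 hY.1))
        (addH_mem S (tail_mem S (cd.1/2) cd.2 hX.1) (tail_mem S (cd.1/2) cd.2 hY.1))
        fun ω => ?_
      exact P2' (abs_add_le _ _) (abs_nonneg _) (abs_nonneg _) h1
    exact hstep.trans (S.subadd _ _ (tail_mem S (cd.1/2) cd.2 hX.1)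
      (tail_mem S (cd.1/2) cd.2 hY.1))

/-- Lemma 3.6: `(Ω, H₁, Ĕ)` is a sub-linear expectation space. -/
theorem H1_sublinear_space (S : SLE Ω) :
    (∀ X : Ω → ℝ, memH1 S X →
      ∃ e : ℝ, Tendsto (fun c : ℝ => S.E (trunc c X)) atTop (nhds e) ∧ brE S X = e) ∧
    memH1 S (fun _ => (0 : ℝ)) ∧
    (∀ X Y : Ω → ℝ, memH1 S X → memH1 S Y → memH1 S (fun ω => X ω + Y ω)) ∧
    (∀ (c : ℝ) (X : Ω → ℝ), memH1 S X → memH1 S (fun ω => c * X ω)) ∧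
    (∀ X Y : Ω → ℝ, memH1 S X → memH1 S Y → (∀ ω, X ω ≤ Y ω) → brE S X ≤ brE S Y) ∧
    (∀ c : ℝ, brE S (fun _ => c) = c) ∧
    (∀ X Y : Ω → ℝ, memH1 S X → memH1 S Y →
      brE S (fun ω => X ω + Y ω) ≤ brE S X + brE S Y) ∧
    (∀ c : ℝ, 0 < c → ∀ X : Ω → ℝ, memH1 S X →
      brE S (fun ω => c * X ω) = c * brE S X) := by
  refine ⟨?_, zero_memH1 S, fun X Y hX hY => add_memH1 S hX hY,
    fun c X hX => smul_memH1 S c hX, ?_, ?_, ?_, ?_⟩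
  · intro X hX
    obtain ⟨e, he⟩ := H1_lim S hX
    exact ⟨e, he, he.limUnder_eq⟩
  · -- monotone
    intro X Y hX hY hle
    obtain ⟨eX, heX⟩ := H1_lim S hX
    obtain ⟨eY, heY⟩ := H1_lim S hY
    rw [show brE S X = eX from heX.limUnder_eq, show brE S Y = eY from heY.limUnder_eq]
    exact le_of_tendsto_of_tendsto' heX heY fun c =>
      S.mono _ _ (trunc_mem S c hX.1) (trunc_mem S c hY.1) fun ω => P_mono (hle ω)
  · -- constants
    intro c
    have hev : (fun c' : ℝ => S.E (trunc c' (fun _ : Ω => c))) =ᶠ[atTop]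
        fun _ => c := by
      filter_upwards [eventually_ge_atTop |c|] with c' h
      obtain ⟨hc1, hc2⟩ := abs_le.mp h
      have he : trunc c' (fun _ : Ω => c) = fun _ : Ω => c := by
        funext ω; simp only [trunc]
        rw [min_eq_left hc2, max_eq_right (by linarith)]
      rw [he, S.isConst]
    exact (Tendsto.congr' hev.symm tendsto_const_nhds).limUnder_eq
  · -- subadditive
    intro X Y hX hY
    obtain ⟨eX, heX⟩ := H1_lim S hX
    obtain ⟨eY, heY⟩ := H1_lim S hY
    obtain ⟨eZ, heZ⟩ := H1_lim S (add_memH1 S hX hY)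
    rw [show brE S (fun ω => X ω + Y ω) = eZ from heZ.limUnder_eq,
      show brE S X = eX from heX.limUnder_eq, show brE S Y = eY from heY.limUnder_eq]
    have hmX : Tendsto (fun c : ℝ => (c/2, 2*c)) atTop (atTop ×ˢ atTop : Filter (ℝ × ℝ)) :=
      (tendsto_id.atTop_div_const two_pos).prodMk (tendsto_id.const_mul_atTop two_pos)
    have hAX : Tendsto (fun c : ℝ =>
        S.E (fun ω => max (min |X ω| (2*c) - c/2) 0)) atTop (nhds 0) := hX.2.comp hmX
    have hAY : Tendsto (fun c : ℝ =>
        S.E (fun ω => max (min |Y ω| (2*c) - c/2) 0)) atTop (nhds 0) := hY.2.comp hmX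
    have hRHS : Tendsto (fun c : ℝ => S.E (trunc c X) + S.E (trunc c Y) +
        (2 * S.E (fun ω => max (min |X ω| (2*c) - c/2) 0) +
          2 * S.E (fun ω => max (min |Y ω| (2*c) - c/2) 0))) atTop
        (nhds (eX + eY + (2*0 + 2*0))) :=
      (heX.add heY).add ((hAX.const_mul 2).add (hAY.const_mul 2))
    have hre : eX + eY + (2*(0:ℝ) + 2*0) = eX + eY := by ring
    rw [hre] at hRHS
    refine le_of_tendsto_of_tendsto heZ hRHS ?_
    filter_upwards [eventually_ge_atTop (0:ℝ)] with c hc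
    have mX := trunc_mem S c hX.1
    have mY := trunc_mem S c hY.1
    have tX := tail_mem S (c/2) (2*c) hX.1
    have tY := tail_mem S (c/2) (2*c) hY.1
    have m3 : (fun ω => 2 * max (min |X ω| (2*c) - c/2) 0) ∈ S.H := smulH_mem S 2 tX
    have m4 : (fun ω => 2 * max (min |Y ω| (2*c) - c/2) 0) ∈ S.H := smulH_mem S 2 tY
    have m34 : (fun ω => 2 * max (min |X ω| (2*c) - c/2) 0 +
        2 * max (min |Y ω| (2*c) - c/2) 0) ∈ S.H := addH_mem S m3 m4
    have mY34 : (fun ω => trunc c Y ω + (2 * max (min |X ω| (2*c) - c/2) 0 +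
        2 * max (min |Y ω| (2*c) - c/2) 0)) ∈ S.H := addH_mem S mY m34
    have h1 : S.E (trunc c (fun ω => X ω + Y ω)) ≤
        S.E (fun ω => trunc c X ω + (trunc c Y ω +
          (2 * max (min |X ω| (2*c) - c/2) 0 + 2 * max (min |Y ω| (2*c) - c/2) 0))) := by
      refine S.mono _ _ (trunc_mem S c (addH_mem S hX.1 hY.1)) (addH_mem S mX mY34)
        fun ω => ?_
      have hp := abs_le.mp (P3 (x := X ω) (y := Y ω) hc)
      show max (-c) (min (X ω + Y ω) c) ≤ _
      simp only [trunc]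
      linarith [hp.1, hp.2]
    have h2 := S.subadd _ _ mX mY34
    have h3 := S.subadd _ _ mY m34
    have h4 := S.subadd _ _ m3 m4
    have h5 : S.E (fun ω => 2 * max (min |X ω| (2*c) - c/2) 0) =
        2 * S.E (fun ω => max (min |X ω| (2*c) - c/2) 0) := S.poshom 2 two_pos _ tX
    have h6 : S.E (fun ω => 2 * max (min |Y ω| (2*c) - c/2) 0) =
        2 * S.E (fun ω => max (min |Y ω| (2*c) - c/2) 0) := S.poshom 2 two_pos _ tY
    linarith
  · -- positive homogeneity
    intro c hc X hX
    obtain ⟨e, he⟩ := H1_lim S hX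
    have hfe : ∀ d : ℝ, S.E (trunc d (fun ω => c * X ω)) = c * S.E (trunc (d/c) X) := by
      intro d
      rw [← S.poshom c hc _ (trunc_mem S (d/c) hX.1)]
      congr 1; funext ω
      show max (-d) (min (c * X ω) d) = c * max (-(d/c)) (min (X ω) (d/c))
      rw [P4 hc, mul_div_cancel₀ _ (ne_of_gt hc)]
    have hT : Tendsto (fun d : ℝ => S.E (trunc d (fun ω => c * X ω))) atTop
        (nhds (c * e)) := by
      have h1 : Tendsto (fun d : ℝ => c * S.E (trunc (d/c) X)) atTop (nhds (c * e)) :=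
        (he.comp (tendsto_id.atTop_div_const hc)).const_mul c
      exact h1.congr fun d => (hfe d).symm
    rw [show brE S X = e from he.limUnder_eq]
    exact hT.limUnder_eq

end
end

section
/- Let $\{X_k\}_{k=1}^n$ be independent random variables in a sub-linear expectation space $(\Omega, \mathcal{H}, \mathbb{E})$ with $\mathbb{E}[X_k^2] < \infty$ for all $k$, and let $\underline{v}$ be the lower capacity ($\underline{v}(A) = 1 - \mathbb{V}(A^c)$, where $\mathbb{V}$ satisfies the sandwich property with respect to $\mathbb{E}$). Then for any constants $\mu_k$ with $\hat{\varepsilon}[X_k] := -\mathbb{E}[-X_k] \le \mu_k \le \mathbb{E}[X_k]$ and any $x > 0$: $\underline{v}\Big(\max_{k \le n} \big|\sum_{i=1}^{k}(X_i - \mu_i)\big| \ge x\Big) \le \frac{2}{x^2} \sum_{i=1}^{n} \mathbb{E}[X_i^2]$. -/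
open Filter MeasureTheory

noncomputable section

variable {Ω : Type*}

open Finset

namespace KolmAux

noncomputable def thf (x x' s : ℝ) : ℝ := max 0 (min 1 ((x - s) / (x - x')))

noncomputable def rrf (x t : ℝ) : ℝ := (min |t| x) ^ 2

variable {x x' s t u v : ℝ}

lemma thf_nonneg : 0 ≤ thf x x' s := le_max_left _ _

lemma thf_le_one : thf x x' s ≤ 1 := max_le zero_le_one (min_le_left _ _)

lemma thf_eq_one (hx : x' < x) (hs : s ≤ x') : thf x x' s = 1 := by
  have h : (1:ℝ) ≤ (x - s) / (x - x') := by
    rw [le_div_iff₀ (by linarith)]; linarith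
  rw [thf, min_eq_left h, max_eq_right zero_le_one]

lemma thf_eq_zero (hx : x' < x) (hs : x ≤ s) : thf x x' s = 0 := by
  have h : (x - s) / (x - x') ≤ 0 :=
    div_nonpos_of_nonpos_of_nonneg (by linarith) (by linarith)
  rw [thf, max_eq_left (le_trans (min_le_right _ _) h)]

lemma lt_of_thf_pos (hx : x' < x) (h : 0 < thf x x' s) : s < x := by
  by_contra hc
  rw [thf_eq_zero hx (not_lt.1 hc)] at h
  exact lt_irrefl _ h

lemma thf_antitone (hx : x' < x) (hst : s ≤ t) : thf x x' t ≤ thf x x' s := by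
  refine max_le_max le_rfl (min_le_min le_rfl ?_)
  exact div_le_div_of_nonneg_right (by linarith) (by linarith)

lemma thf_lip (hx : x' < x) : |thf x x' s - thf x x' t| ≤ |s - t| / (x - x') := by
  have h1 : |thf x x' s - thf x x' t| ≤ |(x - s)/(x - x') - (x - t)/(x - x')| := by
    refine (abs_max_sub_max_le_max _ _ _ _).trans ?_
    simp only [sub_self, abs_zero]
    refine max_le (by positivity) ?_
    refine (abs_min_sub_min_le_max _ _ _ _).trans ?_
    simp only [sub_self, abs_zero]
    exact max_le (by positivity) le_rfl
  refine h1.trans ?_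
  rw [div_sub_div_same, abs_div, abs_of_pos (show (0:ℝ) < x - x' by linarith)]
  have h2 : x - s - (x - t) = t - s := by ring
  rw [h2, abs_sub_comm t s]

lemma rrf_nonneg : 0 ≤ rrf x t := sq_nonneg _

lemma rrf_le_sq (hx : 0 ≤ x) : rrf x t ≤ t ^ 2 := by
  have h0 : 0 ≤ min |t| x := le_min (abs_nonneg t) hx
  have h1 : min |t| x ≤ |t| := min_le_left _ _
  calc (min |t| x)^2 ≤ |t|^2 := by nlinarith
  _ = t ^ 2 := sq_abs t

lemma rrf_le (hx : 0 ≤ x) : rrf x t ≤ x ^ 2 := by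
  have h0 : 0 ≤ min |t| x := le_min (abs_nonneg t) hx
  have h1 : min |t| x ≤ x := min_le_right _ _
  rw [rrf]; nlinarith

lemma rrf_eq_sq (h : |t| ≤ x) : rrf x t = t ^ 2 := by
  rw [rrf, min_eq_left h, sq_abs]

lemma rrf_eq_cap (h : x ≤ |t|) : rrf x t = x ^ 2 := by
  rw [rrf, min_eq_right h]

lemma rrf_ge (hx' : 0 ≤ x') (hx : x' ≤ x) (h : x' ≤ |t|) : x' ^ 2 ≤ rrf x t := by
  have : x' ≤ min |t| x := le_min h hx
  rw [rrf]; nlinarith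

lemma rrf_lip (hx : 0 ≤ x) : |rrf x u - rrf x v| ≤ 2 * x * |u - v| := by
  set p := min |u| x with hp
  set q := min |v| x with hq
  have hp0 : 0 ≤ p := le_min (abs_nonneg u) hx
  have hq0 : 0 ≤ q := le_min (abs_nonneg v) hx
  have hpx : p ≤ x := min_le_right _ _
  have hqx : q ≤ x := min_le_right _ _
  have hpq : |p - q| ≤ |u - v| := by
    refine (abs_min_sub_min_le_max _ _ _ _).trans ?_
    simp only [sub_self, abs_zero]
    exact max_le (abs_abs_sub_abs_le_abs_sub u v) (by positivity)
  have : |rrf x u - rrf x v| = |p + q| * |p - q| := by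
    rw [rrf, rrf, ← hp, ← hq, ← abs_mul]
    congr 1; ring
  rw [this, abs_of_nonneg (by linarith)]
  have h2 : p + q ≤ 2 * x := by linarith
  nlinarith [abs_nonneg (p - q), abs_nonneg (u - v)]

lemma rrf_diff_le (hx : 0 ≤ x) : |rrf x u - rrf x v| ≤ x ^ 2 := by
  rw [abs_sub_le_iff]
  constructor <;> nlinarith [rrf_nonneg (x := x) (t := u), rrf_nonneg (x := x) (t := v),
    rrf_le (t := u) hx, rrf_le (t := v) hx]

lemma abs_mul_sub (a a' B B' : ℝ) : |a * B - a' * B'| ≤ |a - a'| * |B| + |a'| * |B - B'| := by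
  have h : a * B - a' * B' = (a - a') * B + a' * (B - B') := by ring
  rw [h]
  refine (abs_add_le _ _).trans ?_
  rw [abs_mul, abs_mul]

end KolmAux
namespace KolmAux

open Finset

variable {x x' : ℝ}

noncomputable def TTf (μ y : ℕ → ℝ) : ℕ → ℝ
  | 0 => 0
  | m+1 => TTf μ y m + (y m - μ m)

noncomputable def MMf (μ y : ℕ → ℝ) : ℕ → ℝ
  | 0 => 0
  | m+1 => max (MMf μ y m) |TTf μ y (m+1)|

noncomputable def GGf (x x' : ℝ) (μ y : ℕ → ℝ) : ℕ → ℝ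
  | 0 => 0
  | m+1 => GGf x x' μ y m
      + thf x x' (MMf μ y m) * (rrf x (TTf μ y (m+1)) - rrf x (TTf μ y m))

variable {μ y y' : ℕ → ℝ} {m j : ℕ}

lemma TTf_sum : ∀ m, TTf μ y m = ∑ i ∈ range m, (y i - μ i)
  | 0 => by simp [TTf]
  | m+1 => by rw [TTf, sum_range_succ, TTf_sum m]

lemma abs_TTf_le_MMf : ∀ m, |TTf μ y m| ≤ MMf μ y m
  | 0 => by simp [TTf, MMf]
  | m+1 => le_max_right _ _

lemma MMf_mono : Monotone (MMf μ y) :=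
  monotone_nat_of_le_succ (fun m => le_max_left _ _)

lemma MMf_nonneg : ∀ m, 0 ≤ MMf μ y m := fun m => MMf_mono (Nat.zero_le m)

lemma abs_TTf_le_MMf' (hj : j ≤ m) : |TTf μ y j| ≤ MMf μ y m :=
  le_trans (abs_TTf_le_MMf j) (MMf_mono hj)

lemma TTf_congr (h : ∀ i < m, y i = y' i) : ∀ j ≤ m, TTf μ y j = TTf μ y' j := by
  intro j hj
  induction j with
  | zero => simp [TTf]
  | succ k ih =>
      rw [TTf, TTf, ih (by omega), h k (by omega)]

lemma MMf_congr (h : ∀ i < m, y i = y' i) : ∀ j ≤ m, MMf μ y j = MMf μ y' j := by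
  intro j hj
  induction j with
  | zero => simp [MMf]
  | succ k ih =>
      rw [MMf, MMf, ih (by omega), TTf_congr h (k+1) (by omega)]

lemma GGf_congr (h : ∀ i < m, y i = y' i) : ∀ j ≤ m, GGf x x' μ y j = GGf x x' μ y' j := by
  intro j hj
  induction j with
  | zero => simp [GGf]
  | succ k ih =>
      rw [GGf, GGf, ih (by omega), MMf_congr h k (by omega),
        TTf_congr h (k+1) (by omega), TTf_congr h k (by omega)]

lemma TTf_lip : ∀ m, |TTf μ y m - TTf μ y' m| ≤ ∑ i ∈ range m, |y i - y' i|
  | 0 => by simp [TTf]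
  | m+1 => by
      rw [TTf, TTf, sum_range_succ]
      have h1 := TTf_lip m
      have h2 : |(TTf μ y m + (y m - μ m)) - (TTf μ y' m + (y' m - μ m))|
          ≤ |TTf μ y m - TTf μ y' m| + |y m - y' m| := by
        have : (TTf μ y m + (y m - μ m)) - (TTf μ y' m + (y' m - μ m))
            = (TTf μ y m - TTf μ y' m) + (y m - y' m) := by ring
        rw [this]; exact abs_add_le _ _
      linarith

lemma MMf_lip : ∀ m, |MMf μ y m - MMf μ y' m| ≤ ∑ i ∈ range m, |y i - y' i|
  | 0 => by simp [MMf]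
  | m+1 => by
      rw [MMf, MMf, sum_range_succ]
      refine (abs_max_sub_max_le_max _ _ _ _).trans (max_le ?_ ?_)
      · have := MMf_lip m
        have h0 : 0 ≤ |y m - y' m| := abs_nonneg _
        linarith
      · refine (abs_abs_sub_abs_le_abs_sub _ _).trans ?_
        have := TTf_lip (μ := μ) (y := y) (y' := y') (m+1)
        rw [sum_range_succ] at this
        linarith

lemma sumabs_nonneg : 0 ≤ ∑ i ∈ range m, |y i - y' i| :=
  sum_nonneg (fun i _ => abs_nonneg _)

lemma GGf_lip (hx' : 0 < x') (hx : x' < x) :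
    ∀ m, |GGf x x' μ y m - GGf x x' μ y' m|
      ≤ m * (x^2/(x - x') + 4*x) * ∑ i ∈ range m, |y i - y' i|
  | 0 => by simp [GGf]
  | m+1 => by
      have hxpos : (0:ℝ) < x := lt_trans hx' hx
      set CG := x^2/(x - x') + 4*x with hCG
      have hCG0 : 0 ≤ CG := by
        have h0 : 0 ≤ x^2/(x-x') := div_nonneg (sq_nonneg x) (by linarith)
        rw [hCG]; nlinarith
      set D := ∑ i ∈ range m, |y i - y' i| with hD
      set D' := ∑ i ∈ range (m+1), |y i - y' i| with hD'
      have hDD' : D ≤ D' := by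
        rw [hD', sum_range_succ]; have := abs_nonneg (y m - y' m); linarith
      have hD0 : 0 ≤ D := sumabs_nonneg
      have hD'0 : 0 ≤ D' := le_trans hD0 hDD'
      have ih := GGf_lip hx' hx m
      rw [← hCG, ← hD] at ih
      rw [GGf, GGf]
      have key : |thf x x' (MMf μ y m) * (rrf x (TTf μ y (m+1)) - rrf x (TTf μ y m))
          - thf x x' (MMf μ y' m) * (rrf x (TTf μ y' (m+1)) - rrf x (TTf μ y' m))|
          ≤ CG * D' := by
        refine (abs_mul_sub _ _ _ _).trans ?_
        have h1 : |thf x x' (MMf μ y m) - thf x x' (MMf μ y' m)| ≤ D' / (x - x') := by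
          refine (thf_lip hx).trans ?_
          apply div_le_div_of_nonneg_right ?_ (by linarith)
          exact (MMf_lip m).trans hDD'
        have h2 : |rrf x (TTf μ y (m+1)) - rrf x (TTf μ y m)| ≤ x^2 := rrf_diff_le hxpos.le
        have h3 : |(rrf x (TTf μ y (m+1)) - rrf x (TTf μ y m))
            - (rrf x (TTf μ y' (m+1)) - rrf x (TTf μ y' m))|
            ≤ 4 * x * D' := by
          have ha : |rrf x (TTf μ y (m+1)) - rrf x (TTf μ y' (m+1))| ≤ 2*x*D' := by
            refine (rrf_lip hxpos.le).trans ?_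
            have := TTf_lip (μ := μ) (y := y) (y' := y') (m+1)
            nlinarith
          have hb : |rrf x (TTf μ y m) - rrf x (TTf μ y' m)| ≤ 2*x*D' := by
            refine (rrf_lip hxpos.le).trans ?_
            have h4 := (TTf_lip (μ := μ) (y := y) (y' := y') m).trans hDD'
            nlinarith
          have hc : (rrf x (TTf μ y (m+1)) - rrf x (TTf μ y m))
              - (rrf x (TTf μ y' (m+1)) - rrf x (TTf μ y' m))
              = (rrf x (TTf μ y (m+1)) - rrf x (TTf μ y' (m+1)))
                - (rrf x (TTf μ y m) - rrf x (TTf μ y' m)) := by ring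
          rw [hc]
          refine (abs_sub _ _).trans ?_
          linarith
        have h4 : |thf x x' (MMf μ y' m)| ≤ 1 := by
          rw [abs_of_nonneg thf_nonneg]; exact thf_le_one
        have habs1 : 0 ≤ |rrf x (TTf μ y (m+1)) - rrf x (TTf μ y m)| := abs_nonneg _
        have habs2 : 0 ≤ |thf x x' (MMf μ y m) - thf x x' (MMf μ y' m)| := abs_nonneg _
        have habs3 : 0 ≤ |(rrf x (TTf μ y (m+1)) - rrf x (TTf μ y m))
            - (rrf x (TTf μ y' (m+1)) - rrf x (TTf μ y' m))| := abs_nonneg _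
        have hstep1 : |thf x x' (MMf μ y m) - thf x x' (MMf μ y' m)|
            * |rrf x (TTf μ y (m+1)) - rrf x (TTf μ y m)| ≤ (D'/(x-x')) * x^2 := by
          apply mul_le_mul h1 h2 habs1
          exact div_nonneg hD'0 (by linarith)
        have hstep2 : |thf x x' (MMf μ y' m)|
            * |(rrf x (TTf μ y (m+1)) - rrf x (TTf μ y m))
              - (rrf x (TTf μ y' (m+1)) - rrf x (TTf μ y' m))| ≤ 1 * (4*x*D') := by
          apply mul_le_mul h4 h3 habs3
          norm_num
        have heq : (D'/(x-x')) * x^2 = (x^2/(x-x')) * D' := by ring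
        rw [hCG]
        nlinarith [hstep1, hstep2]
      calc |GGf x x' μ y m
            + thf x x' (MMf μ y m) * (rrf x (TTf μ y (m+1)) - rrf x (TTf μ y m))
          - (GGf x x' μ y' m
            + thf x x' (MMf μ y' m) * (rrf x (TTf μ y' (m+1)) - rrf x (TTf μ y' m)))|
          ≤ |GGf x x' μ y m - GGf x x' μ y' m|
            + |thf x x' (MMf μ y m) * (rrf x (TTf μ y (m+1)) - rrf x (TTf μ y m))
              - thf x x' (MMf μ y' m) * (rrf x (TTf μ y' (m+1)) - rrf x (TTf μ y' m))| := by
            have heq : GGf x x' μ y m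
                + thf x x' (MMf μ y m) * (rrf x (TTf μ y (m+1)) - rrf x (TTf μ y m))
                - (GGf x x' μ y' m
                + thf x x' (MMf μ y' m) * (rrf x (TTf μ y' (m+1)) - rrf x (TTf μ y' m)))
                = (GGf x x' μ y m - GGf x x' μ y' m)
                  + (thf x x' (MMf μ y m) * (rrf x (TTf μ y (m+1)) - rrf x (TTf μ y m))
                  - thf x x' (MMf μ y' m) * (rrf x (TTf μ y' (m+1)) - rrf x (TTf μ y' m))) := by
              ring
            rw [heq]; exact abs_add_le _ _
      _ ≤ ↑m * CG * D + CG * D' := by linarith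
      _ ≤ (↑(m+1)) * CG * D' := by
            have hmono : ↑m * CG * D ≤ ↑m * CG * D' :=
              mul_le_mul_of_nonneg_left hDD' (mul_nonneg (Nat.cast_nonneg m) hCG0)
            push_cast
            nlinarith

lemma GGf_abs_le (hx : 0 ≤ x) : ∀ m, |GGf x x' μ y m| ≤ m * x^2
  | 0 => by simp [GGf]
  | m+1 => by
      rw [GGf]
      have ih := GGf_abs_le hx m
      have h1 : |thf x x' (MMf μ y m) * (rrf x (TTf μ y (m+1)) - rrf x (TTf μ y m))| ≤ x^2 := by
        rw [abs_mul, abs_of_nonneg thf_nonneg]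
        have h2 := rrf_diff_le (x := x) (u := TTf μ y (m+1)) (v := TTf μ y m) hx
        have h3 := thf_le_one (x := x) (x' := x') (s := MMf μ y m)
        have h4 := thf_nonneg (x := x) (x' := x') (s := MMf μ y m)
        nlinarith [abs_nonneg (rrf x (TTf μ y (m+1)) - rrf x (TTf μ y m))]
      refine (abs_add_le _ _).trans ?_
      push_cast
      linarith

lemma GGf_inv (hx' : 0 < x') (hx : x' < x) :
    ∀ m, (1 - thf x x' (MMf μ y (m-1))) * x'^2
        + thf x x' (MMf μ y (m-1)) * rrf x (TTf μ y m) ≤ GGf x x' μ y m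
  | 0 => by
      simp only [Nat.zero_sub, GGf, MMf, TTf]
      rw [thf_eq_one hx hx'.le]
      have : rrf x 0 = 0 := by rw [rrf, abs_zero, min_eq_left (le_of_lt (lt_trans hx' hx)), zero_pow] <;> norm_num
      rw [this]; ring_nf; exact le_refl 0
  | m+1 => by
      have ih := GGf_inv hx' hx m
      set A := thf x x' (MMf μ y (m-1)) with hA
      set B := thf x x' (MMf μ y m) with hB
      have hBA : B ≤ A := by
        rw [hA, hB]
        exact thf_antitone hx (MMf_mono (by omega))
      have hstep : GGf x x' μ y (m+1)
          = GGf x x' μ y m + B * (rrf x (TTf μ y (m+1)) - rrf x (TTf μ y m)) := rfl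
      have hsub : (m+1) - 1 = m := by omega
      rw [hsub]
      rw [hstep]
      -- goal: (1-B) x'^2 + B * rrf(TT (m+1)) ≤ GG m + B (rr (m+1) - rr m)
      -- from ih: GG m ≥ (1-A)x'^2 + A rr m. Suffices (A-B)(rr m - x'^2) ≥ 0.
      have hkey : (A - B) * (rrf x (TTf μ y m) - x'^2) ≥ 0 := by
        rcases eq_or_lt_of_le hBA with h | h
        · rw [h]; ring_nf; exact le_refl 0
        · -- B < A: thf strictly smaller at MMf m
          have hMM : MMf μ y (m-1) < MMf μ y m := by
            rcases lt_or_ge (MMf μ y (m-1)) (MMf μ y m) with h1 | h1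
            · exact h1
            · exfalso
              have : MMf μ y m = MMf μ y (m-1) :=
                le_antisymm h1 (MMf_mono (by omega))
              rw [hA, hB, this] at h
              exact lt_irrefl _ h
          have hm1 : 1 ≤ m := by
            by_contra hc
            have hm0 : m = 0 := by omega
            rw [hm0] at hMM
            simp at hMM
          have hB1 : B < 1 := lt_of_lt_of_le h (thf_le_one)
          have hMx' : x' < MMf μ y m := by
            by_contra hc
            rw [hB, thf_eq_one hx (not_lt.1 hc)] at hB1
            exact lt_irrefl _ hB1
          -- MMf m = |TTf m| since it increased
          obtain ⟨k, hk⟩ : ∃ k, m = k + 1 := ⟨m - 1, by omega⟩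
          have hMeq : MMf μ y m = |TTf μ y m| := by
            rw [hk, MMf]
            rcases max_cases (MMf μ y k) |TTf μ y (k+1)| with ⟨h1, h2⟩ | ⟨h1, h2⟩
            · exfalso
              rw [hk] at hMM
              have : k + 1 - 1 = k := by omega
              rw [this] at hMM
              rw [MMf, h1] at hMM
              exact lt_irrefl _ hMM
            · rw [h1]
          have hrr : x'^2 ≤ rrf x (TTf μ y m) := by
            apply rrf_ge hx'.le (le_of_lt hx)
            rw [← hMeq]; exact hMx'.le
          nlinarith
      nlinarith

lemma GGf_nonneg (hx' : 0 < x') (hx : x' < x) (m : ℕ) : 0 ≤ GGf x x' μ y m := by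
  have h := GGf_inv (μ := μ) (y := y) hx' hx m
  have h1 := thf_le_one (x := x) (x' := x') (s := MMf μ y (m-1))
  have h2 := thf_nonneg (x := x) (x' := x') (s := MMf μ y (m-1))
  have h3 := rrf_nonneg (x := x) (t := TTf μ y m)
  nlinarith

lemma GGf_ge_event (hx' : 0 < x') (hx : x' < x) {m j : ℕ} (hj1 : 1 ≤ j) (hjm : j ≤ m)
    (hT : x ≤ |TTf μ y j|) : x'^2 ≤ GGf x x' μ y m := by
  have h := GGf_inv (μ := μ) (y := y) hx' hx m
  have h1 := thf_le_one (x := x) (x' := x') (s := MMf μ y (m-1))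
  have h2 := thf_nonneg (x := x) (x' := x') (s := MMf μ y (m-1))
  rcases le_or_gt x (MMf μ y (m-1)) with hc | hc
  · rw [thf_eq_zero hx hc] at h
    have h3 := rrf_nonneg (x := x) (t := TTf μ y m)
    nlinarith
  · -- witness must be j = m
    have hjem : j = m := by
      by_contra hne
      have hjm1 : j ≤ m - 1 := by omega
      have := (abs_TTf_le_MMf' (μ := μ) (y := y) hjm1).trans_lt hc
      linarith
    rw [hjem] at hT
    have hrr : rrf x (TTf μ y m) = x^2 := rrf_eq_cap hT
    rw [hrr] at h
    have hx2 : x'^2 ≤ x^2 := by nlinarith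
    nlinarith

end KolmAux

namespace KolmAux

variable {Ω : Type*} (S : SLE Ω)

lemma mem_comp1 {X : Ω → ℝ} (hX : X ∈ S.H) (φ : ℝ → ℝ) (C : ℝ) (hC : 0 < C)
    (h : ∀ s t : ℝ, |φ s - φ t| ≤ C * (1 + |s| + |t|) * |s - t|) :
    (fun ω => φ (X ω)) ∈ S.H := by
  have hcl : ClLip (fun v : Fin 1 → ℝ => φ (v 0)) := by
    refine ⟨C, hC, 1, fun v w => ?_⟩
    have hv : |v 0| ≤ ‖v‖ := by
      have := norm_le_pi_norm v 0; simpa [Real.norm_eq_abs] using this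
    have hw : |w 0| ≤ ‖w‖ := by
      have := norm_le_pi_norm w 0; simpa [Real.norm_eq_abs] using this
    have hvw : |v 0 - w 0| ≤ ‖v - w‖ := by
      have := norm_le_pi_norm (v - w) 0; simpa [Real.norm_eq_abs] using this
    have hn1 : (0:ℝ) ≤ ‖v - w‖ := norm_nonneg _
    calc |φ (v 0) - φ (w 0)| ≤ C * (1 + |v 0| + |w 0|) * |v 0 - w 0| := h _ _
      _ ≤ C * (1 + ‖v‖ ^ 1 + ‖w‖ ^ 1) * ‖v - w‖ := by
          simp only [pow_one]
          have h2 : (0:ℝ) ≤ 1 + |v 0| + |w 0| := by positivity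
          have h3 : 1 + |v 0| + |w 0| ≤ 1 + ‖v‖ + ‖w‖ := by linarith
          have h4 : C * (1 + |v 0| + |w 0|) ≤ C * (1 + ‖v‖ + ‖w‖) :=
            mul_le_mul_of_nonneg_left h3 hC.le
          have h5 : 0 ≤ C * (1 + |v 0| + |w 0|) := mul_nonneg hC.le h2
          exact mul_le_mul h4 hvw (abs_nonneg _) (by nlinarith [norm_nonneg v, norm_nonneg w])
  have := S.comp_mem 1 (fun v => φ (v 0)) hcl (fun _ => X) (fun _ => hX)
  simpa using this

lemma mem_comp2 {X Y : Ω → ℝ} (hX : X ∈ S.H) (hY : Y ∈ S.H) (φ : ℝ → ℝ → ℝ) (C : ℝ)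
    (hC : 0 < C)
    (h : ∀ s t s' t' : ℝ, |φ s t - φ s' t'|
      ≤ C * (1 + |s| + |t| + |s'| + |t'|) * (|s - s'| + |t - t'|)) :
    (fun ω => φ (X ω) (Y ω)) ∈ S.H := by
  set Xv : Fin 2 → Ω → ℝ := fun i => if i.val = 0 then X else Y with hXv
  have hmem : ∀ i, Xv i ∈ S.H := by
    intro i; fin_cases i <;> simp [hXv, hX, hY]
  have hcl : ClLip (fun v : Fin 2 → ℝ => φ (v 0) (v 1)) := by
    refine ⟨4 * C, by linarith, 1, fun v w => ?_⟩
    have hv0 : |v 0| ≤ ‖v‖ := by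
      have := norm_le_pi_norm v 0; simpa [Real.norm_eq_abs] using this
    have hv1 : |v 1| ≤ ‖v‖ := by
      have := norm_le_pi_norm v 1; simpa [Real.norm_eq_abs] using this
    have hw0 : |w 0| ≤ ‖w‖ := by
      have := norm_le_pi_norm w 0; simpa [Real.norm_eq_abs] using this
    have hw1 : |w 1| ≤ ‖w‖ := by
      have := norm_le_pi_norm w 1; simpa [Real.norm_eq_abs] using this
    have hd0 : |v 0 - w 0| ≤ ‖v - w‖ := by
      have := norm_le_pi_norm (v - w) 0; simpa [Real.norm_eq_abs] using this
    have hd1 : |v 1 - w 1| ≤ ‖v - w‖ := by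
      have := norm_le_pi_norm (v - w) 1; simpa [Real.norm_eq_abs] using this
    calc |φ (v 0) (v 1) - φ (w 0) (w 1)|
        ≤ C * (1 + |v 0| + |v 1| + |w 0| + |w 1|) * (|v 0 - w 0| + |v 1 - w 1|) := h _ _ _ _
      _ ≤ 4 * C * (1 + ‖v‖ ^ 1 + ‖w‖ ^ 1) * ‖v - w‖ := by
          simp only [pow_one]
          have hnv : (0:ℝ) ≤ ‖v‖ := norm_nonneg _
          have hnw : (0:ℝ) ≤ ‖w‖ := norm_nonneg _
          have hnd : (0:ℝ) ≤ ‖v - w‖ := norm_nonneg _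
          have h1 : 1 + |v 0| + |v 1| + |w 0| + |w 1| ≤ 2 * (1 + ‖v‖ + ‖w‖) := by linarith
          have h2 : |v 0 - w 0| + |v 1 - w 1| ≤ 2 * ‖v - w‖ := by linarith
          have h3 : (0:ℝ) ≤ 1 + |v 0| + |v 1| + |w 0| + |w 1| := by positivity
          nlinarith [abs_nonneg (v 0 - w 0), abs_nonneg (v 1 - w 1), hC.le,
            mul_le_mul h1 h2 (by positivity) (by positivity)]
  have := S.comp_mem 2 (fun v => φ (v 0) (v 1)) hcl Xv hmem
  simpa [hXv] using this

lemma mem_add_const {Z : Ω → ℝ} (hZ : Z ∈ S.H) (c : ℝ) : (fun ω => Z ω + c) ∈ S.H := by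
  refine mem_comp1 S hZ (fun s => s + c) 1 one_pos (fun s t => ?_)
  have h : s + c - (t + c) = s - t := by ring
  rw [h]
  nlinarith [abs_nonneg (s - t), abs_nonneg s, abs_nonneg t]

lemma mem_neg {Z : Ω → ℝ} (hZ : Z ∈ S.H) : (fun ω => -Z ω) ∈ S.H := by
  refine mem_comp1 S hZ (fun s => -s) 1 one_pos (fun s t => ?_)
  have h : -s - -t = -(s - t) := by ring
  rw [h, abs_neg]
  nlinarith [abs_nonneg (s - t), abs_nonneg s, abs_nonneg t]

lemma mem_sq {X : Ω → ℝ} (hX : X ∈ S.H) : (fun ω => X ω ^ 2) ∈ S.H := by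
  refine mem_comp1 S hX (fun s => s ^ 2) 1 one_pos (fun s t => ?_)
  have h : |s ^ 2 - t ^ 2| = |s + t| * |s - t| := by rw [← abs_mul]; congr 1; ring
  rw [h]
  nlinarith [abs_nonneg (s - t), abs_nonneg s, abs_nonneg t, abs_add_le s t, abs_nonneg (s + t)]

lemma E_add_const {Z : Ω → ℝ} (hZ : Z ∈ S.H) (c : ℝ) :
    S.E (fun ω => Z ω + c) = S.E Z + c := by
  have hZc : (fun ω => Z ω + c) ∈ S.H := mem_add_const S hZ c
  have h1 : S.E (fun ω => Z ω + c) ≤ S.E Z + c := by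
    have h := S.subadd Z (fun _ => c) hZ (S.const_mem c)
    rw [S.isConst] at h
    exact h
  have h2 : S.E Z ≤ S.E (fun ω => Z ω + c) + -c := by
    have h := S.subadd (fun ω => Z ω + c) (fun _ => -c) hZc (S.const_mem (-c))
    rw [S.isConst] at h
    have heq : (fun ω => (Z ω + c) + -c) = Z := by funext ω; ring
    simpa [heq] using h
  linarith

lemma E_sq_nonneg {X : Ω → ℝ} (hX : X ∈ S.H) : 0 ≤ S.E (fun ω => X ω ^ 2) := by
  have h := S.mono (fun _ => 0) (fun ω => X ω ^ 2) (S.const_mem 0) (mem_sq S hX)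
    (fun ω => sq_nonneg _)
  rw [S.isConst] at h
  exact h

lemma E_diff_le {Z Z' : Ω → ℝ} (hZ : Z ∈ S.H) (hZ' : Z' ∈ S.H) {d : ℝ} (hd : 0 ≤ d)
    (h : ∀ ω, |Z ω - Z' ω| ≤ d) : |S.E Z - S.E Z'| ≤ d := by
  have h1 : S.E Z ≤ S.E Z' + d := by
    have hm := S.mono Z (fun ω => Z' ω + d) hZ (mem_add_const S hZ' d)
      (fun ω => by have := (abs_le.1 (h ω)).2; show Z ω ≤ Z' ω + d; linarith)
    rw [E_add_const S hZ' d] at hm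
    exact hm
  have h2 : S.E Z' ≤ S.E Z + d := by
    have hm := S.mono Z' (fun ω => Z ω + d) hZ' (mem_add_const S hZ d)
      (fun ω => by have := (abs_le.1 (h ω)).1; show Z' ω ≤ Z ω + d; linarith)
    rw [E_add_const S hZ d] at hm
    exact hm
  rw [abs_sub_le_iff]
  constructor <;> linarith

/-- The key one-step estimate: `E[-(t + X - μ)²] ≥ -t² - 2E[X²]`
whenever `-E[-X] ≤ μ ≤ E[X]`. -/
lemma core_step {W : Ω → ℝ} (hW : W ∈ S.H) (mk t : ℝ)
    (h1 : -S.E (fun ω => -W ω) ≤ mk) (h2 : mk ≤ S.E W) :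
    -(t ^ 2) - 2 * S.E (fun ω => W ω ^ 2) ≤ S.E (fun ω => -(t + W ω - mk) ^ 2) := by
  set a : ℝ := t - mk with ha
  have hsq : (fun ω => W ω ^ 2) ∈ S.H := mem_sq S hW
  have hσ0 : 0 ≤ S.E (fun ω => W ω ^ 2) := E_sq_nonneg S hW
  have hmix : (fun ω => -(2 * a) * W ω - W ω ^ 2) ∈ S.H := by
    refine mem_comp1 S hW (fun s => -(2 * a) * s - s ^ 2) (2 * |a| + 2) (by positivity)
      (fun s t => ?_)
    have heq : -(2*a)*s - s^2 - (-(2*a)*t - t^2) = (2*a)*(t - s) + (t^2 - s^2) := by ring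
    rw [heq]
    have hb1 : |(2*a)*(t-s) + (t^2 - s^2)| ≤ |2 * a| * |t - s| + |t + s| * |t - s| := by
      refine (abs_add_le _ _).trans ?_
      rw [abs_mul]
      have : |t^2 - s^2| = |t + s| * |t - s| := by rw [← abs_mul]; congr 1; ring
      rw [this]
    have hb2 : |2*a| = 2*|a| := by rw [abs_mul]; norm_num
    have hts : |t - s| = |s - t| := abs_sub_comm t s
    have hts2 : |t + s| ≤ |t| + |s| := abs_add_le t s
    rw [hb2, hts] at hb1
    have hb3 : |t + s| * |s - t| ≤ (|t| + |s|) * |s - t| :=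
      mul_le_mul_of_nonneg_right hts2 (abs_nonneg _)
    nlinarith [abs_nonneg (s - t), abs_nonneg s, abs_nonneg t, abs_nonneg a,
      mul_nonneg (abs_nonneg a) (abs_nonneg (s - t)),
      mul_nonneg (abs_nonneg s) (abs_nonneg (s - t)),
      mul_nonneg (abs_nonneg t) (abs_nonneg (s - t)),
      mul_nonneg (mul_nonneg (abs_nonneg a) (abs_nonneg s)) (abs_nonneg (s - t)),
      mul_nonneg (mul_nonneg (abs_nonneg a) (abs_nonneg t)) (abs_nonneg (s - t))]
  have hlin : (fun ω => -(2 * a) * W ω) ∈ S.H := by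
    refine mem_comp1 S hW (fun s => -(2 * a) * s) (2 * |a| + 1) (by positivity)
      (fun s t => ?_)
    have heq : -(2*a)*s - -(2*a)*t = -(2*a)*(s - t) := by ring
    rw [heq, abs_mul]
    have : |(-(2*a))| = 2*|a| := by rw [abs_neg, abs_mul]; norm_num
    rw [this]
    nlinarith [abs_nonneg (s - t), abs_nonneg s, abs_nonneg t, abs_nonneg a,
      mul_nonneg (abs_nonneg a) (abs_nonneg (s - t)),
      mul_nonneg (abs_nonneg s) (abs_nonneg (s - t)),
      mul_nonneg (abs_nonneg t) (abs_nonneg (s - t)),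
      mul_nonneg (mul_nonneg (abs_nonneg a) (abs_nonneg s)) (abs_nonneg (s - t)),
      mul_nonneg (mul_nonneg (abs_nonneg a) (abs_nonneg t)) (abs_nonneg (s - t))]
  -- E[-2aW] ≥ -2a·mk
  have hEll : -(2 * a) * mk ≤ S.E (fun ω => -(2 * a) * W ω) := by
    rcases lt_trichotomy a 0 with hlt | heq0 | hgt
    · have hp := S.poshom (-(2 * a)) (by linarith) W hW
      rw [hp]
      exact mul_le_mul_of_nonneg_left h2 (by linarith)
    · have hfun : (fun ω => -(2 * a) * W ω) = (fun _ => (0:ℝ)) := by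
        funext ω; rw [heq0]; ring
      rw [hfun, S.isConst, heq0]; norm_num
    · have hnW : (fun ω => -W ω) ∈ S.H := mem_neg S hW
      have hfun : (fun ω => -(2 * a) * W ω) = (fun ω => (2 * a) * (-W ω)) := by
        funext ω; ring
      rw [hfun, S.poshom (2 * a) (by linarith) _ hnW]
      have hEnW : -mk ≤ S.E (fun ω => -W ω) := by linarith
      nlinarith
  -- subadditivity
  have hsub : S.E (fun ω => -(2 * a) * W ω)
      ≤ S.E (fun ω => -(2 * a) * W ω - W ω ^ 2) + S.E (fun ω => W ω ^ 2) := by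
    have h := S.subadd (fun ω => -(2 * a) * W ω - W ω ^ 2) (fun ω => W ω ^ 2) hmix hsq
    have heq : (fun ω => (-(2 * a) * W ω - W ω ^ 2) + W ω ^ 2)
        = (fun ω => -(2 * a) * W ω) := by funext ω; ring
    simpa [heq] using h
  -- translation
  have htr : S.E (fun ω => -(t + W ω - mk) ^ 2)
      = S.E (fun ω => -(2 * a) * W ω - W ω ^ 2) - a ^ 2 := by
    have heq : (fun ω => -(t + W ω - mk) ^ 2)
        = (fun ω => (-(2 * a) * W ω - W ω ^ 2) + -(a ^ 2)) := by
      funext ω; rw [ha]; ring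
    rw [heq, E_add_const S hmix]
    ring
  have hexp : a ^ 2 = t ^ 2 - 2 * t * mk + mk ^ 2 := by rw [ha]; ring
  have hexp2 : -(2 * a) * mk = -2 * t * mk + 2 * mk ^ 2 := by rw [ha]; ring
  linarith [sq_nonneg mk, hEll, hsub, htr]

end KolmAux

namespace KolmAux

variable {Ω : Type*} (S : SLE Ω)

noncomputable def Psi (S : SLE Ω) (W : Ω → ℝ) (x mk t a : ℝ) : ℝ :=
  S.E (fun ω => -(a * (rrf x (t + W ω - mk) - rrf x t)))

lemma mem_psi_integrand {W : Ω → ℝ} (hW : W ∈ S.H) {x : ℝ} (hx : 0 ≤ x) (mk t a : ℝ) :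
    (fun ω => -(a * (rrf x (t + W ω - mk) - rrf x t))) ∈ S.H := by
  refine mem_comp1 S hW (fun s => -(a * (rrf x (t + s - mk) - rrf x t)))
    (|a| * (2 * x) + 1) (by positivity) (fun s s' => ?_)
  have heq : -(a * (rrf x (t + s - mk) - rrf x t)) - -(a * (rrf x (t + s' - mk) - rrf x t))
      = a * (rrf x (t + s' - mk) - rrf x (t + s - mk)) := by ring
  rw [heq, abs_mul]
  have h1 : |rrf x (t + s' - mk) - rrf x (t + s - mk)| ≤ 2 * x * |s' - s| := by
    refine (rrf_lip hx).trans ?_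
    have : t + s' - mk - (t + s - mk) = s' - s := by ring
    rw [this]
  have h2 : |s' - s| = |s - s'| := abs_sub_comm _ _
  rw [h2] at h1
  have h3 : |a| * |rrf x (t + s' - mk) - rrf x (t + s - mk)| ≤ |a| * (2 * x * |s - s'|) :=
    mul_le_mul_of_nonneg_left h1 (abs_nonneg a)
  refine h3.trans ?_
  nlinarith [abs_nonneg (s - s'), abs_nonneg s, abs_nonneg s', abs_nonneg a,
    mul_nonneg (abs_nonneg a) (mul_nonneg (by linarith : (0:ℝ) ≤ 2*x) (abs_nonneg (s - s'))),
    mul_nonneg (mul_nonneg (abs_nonneg a) (by linarith : (0:ℝ) ≤ 2*x))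
      (mul_nonneg (abs_nonneg s) (abs_nonneg (s - s'))),
    mul_nonneg (mul_nonneg (abs_nonneg a) (by linarith : (0:ℝ) ≤ 2*x))
      (mul_nonneg (abs_nonneg s') (abs_nonneg (s - s'))),
    mul_nonneg (abs_nonneg s) (abs_nonneg (s - s')),
    mul_nonneg (abs_nonneg s') (abs_nonneg (s - s'))]

lemma Psi_bound {W : Ω → ℝ} (hW : W ∈ S.H) {x mk : ℝ} (hx : 0 < x)
    (h1 : -S.E (fun ω => -W ω) ≤ mk) (h2 : mk ≤ S.E W) (t a : ℝ)
    (ha0 : 0 ≤ a) (ha1 : a ≤ 1) (hta : 0 < a → |t| < x) :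
    -(2 * S.E (fun ω => W ω ^ 2)) ≤ Psi S W x mk t a := by
  have hσ0 := E_sq_nonneg S hW
  rcases eq_or_lt_of_le ha0 with h0 | h0
  · have hfun : (fun ω => -(a * (rrf x (t + W ω - mk) - rrf x t))) = fun _ => (0:ℝ) := by
      funext ω; rw [← h0]; ring
    rw [Psi, hfun, S.isConst]; linarith
  · have htx := hta h0
    have hrt : rrf x t = t ^ 2 := rrf_eq_sq htx.le
    have hmem1 : (fun ω => -(rrf x (t + W ω - mk))) ∈ S.H := by
      refine mem_comp1 S hW (fun s => -(rrf x (t + s - mk))) (2 * x + 1) (by positivity)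
        (fun s s' => ?_)
      have heq : -(rrf x (t + s - mk)) - -(rrf x (t + s' - mk))
          = rrf x (t + s' - mk) - rrf x (t + s - mk) := by ring
      rw [heq]
      have hl : |rrf x (t + s' - mk) - rrf x (t + s - mk)| ≤ 2 * x * |s - s'| := by
        refine (rrf_lip hx.le).trans ?_
        have : t + s' - mk - (t + s - mk) = s' - s := by ring
        rw [this, abs_sub_comm]
      refine hl.trans ?_
      nlinarith [abs_nonneg (s - s'), abs_nonneg s, abs_nonneg s',
        mul_nonneg (abs_nonneg s) (abs_nonneg (s - s')),
        mul_nonneg (abs_nonneg s') (abs_nonneg (s - s'))]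
    have hmemsq : (fun ω => -(t + W ω - mk) ^ 2) ∈ S.H := by
      refine mem_comp1 S hW (fun s => -(t + s - mk) ^ 2) (2 * (|t| + |mk|) + 2)
        (by positivity) (fun s s' => ?_)
      have heq : |(-(t + s - mk) ^ 2) - (-(t + s' - mk) ^ 2)|
          = |(t + s' - mk) + (t + s - mk)| * |s' - s| := by
        rw [← abs_mul]; congr 1; ring
      rw [heq, abs_sub_comm s' s]
      have hb : |(t + s' - mk) + (t + s - mk)| ≤ 2*|t| + 2*|mk| + |s| + |s'| := by
        have h3 := abs_add_le (t + s' - mk) (t + s - mk)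
        have h4 : |t + s' - mk| ≤ |t| + |s'| + |mk| := by
          have := abs_add_le (t + s') (-mk)
          have h5 := abs_add_le t s'
          rw [abs_neg] at this
          calc |t + s' - mk| = |(t + s') + (-mk)| := by ring_nf
            _ ≤ |t + s'| + |mk| := this
            _ ≤ |t| + |s'| + |mk| := by linarith
        have h6 : |t + s - mk| ≤ |t| + |s| + |mk| := by
          have := abs_add_le (t + s) (-mk)
          have h5 := abs_add_le t s
          rw [abs_neg] at this
          calc |t + s - mk| = |(t + s) + (-mk)| := by ring_nf
            _ ≤ |t + s| + |mk| := this
            _ ≤ |t| + |s| + |mk| := by linarith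
        linarith
      have hd0 := abs_nonneg (s - s')
      refine (mul_le_mul_of_nonneg_right hb hd0).trans ?_
      nlinarith [abs_nonneg s, abs_nonneg s', abs_nonneg t, abs_nonneg mk,
        mul_nonneg (abs_nonneg t) hd0, mul_nonneg (abs_nonneg mk) hd0,
        mul_nonneg (mul_nonneg (abs_nonneg t) (abs_nonneg s)) hd0,
        mul_nonneg (mul_nonneg (abs_nonneg t) (abs_nonneg s')) hd0,
        mul_nonneg (mul_nonneg (abs_nonneg mk) (abs_nonneg s)) hd0,
        mul_nonneg (mul_nonneg (abs_nonneg mk) (abs_nonneg s')) hd0,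
        mul_nonneg (abs_nonneg s) hd0, mul_nonneg (abs_nonneg s') hd0]
    have hstep1 : S.E (fun ω => -(t + W ω - mk) ^ 2) ≤ S.E (fun ω => -(rrf x (t + W ω - mk))) :=
      S.mono _ _ hmemsq hmem1 (fun ω => by
        have := rrf_le_sq (x := x) (t := t + W ω - mk) hx.le
        simp only [neg_le_neg_iff]
        linarith)
    have hcore := core_step S hW mk t h1 h2
    have hE1 : -(t ^ 2) - 2 * S.E (fun ω => W ω ^ 2)
        ≤ S.E (fun ω => -(rrf x (t + W ω - mk))) := le_trans hcore hstep1
    have hfun2 : (fun ω => -(a * (rrf x (t + W ω - mk) - rrf x t)))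
        = (fun ω => a * ((-(rrf x (t + W ω - mk))) + rrf x t)) := by
      funext ω; ring
    have hpos := S.poshom a h0 (fun ω => (-(rrf x (t + W ω - mk))) + rrf x t)
      (mem_add_const S hmem1 _)
    rw [Psi, hfun2, hpos, E_add_const S hmem1, hrt]
    have hkey : a * (-(2 * S.E (fun ω => W ω ^ 2)))
        ≤ a * (S.E (fun ω => -(rrf x (t + W ω - mk))) + t ^ 2) :=
      mul_le_mul_of_nonneg_left (by linarith) h0.le
    nlinarith

lemma Psi_th_lip {W : Ω → ℝ} (hW : W ∈ S.H) {x x' : ℝ} (hx' : 0 < x') (hx : x' < x)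
    (mk t s t' s' : ℝ) :
    |Psi S W x mk t (thf x x' s) - Psi S W x mk t' (thf x x' s')|
      ≤ (x ^ 2 / (x - x') + 4 * x) * (|t - t'| + |s - s'|) := by
  have hxpos : (0:ℝ) < x := lt_trans hx' hx
  set d : ℝ := x ^ 2 / (x - x') * |s - s'| + 4 * x * |t - t'| with hd
  have hd0 : 0 ≤ d := by
    rw [hd]
    have : 0 ≤ x ^ 2 / (x - x') := div_nonneg (sq_nonneg x) (by linarith)
    positivity
  have hdiff : |Psi S W x mk t (thf x x' s) - Psi S W x mk t' (thf x x' s')| ≤ d := by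
    rw [Psi, Psi]
    refine E_diff_le S (mem_psi_integrand S hW hxpos.le mk t _)
      (mem_psi_integrand S hW hxpos.le mk t' _) hd0 (fun ω => ?_)
    set a := thf x x' s
    set a' := thf x x' s'
    set R := rrf x (t + W ω - mk) - rrf x t with hR
    set R' := rrf x (t' + W ω - mk) - rrf x t' with hR'
    have heq : -(a * R) - -(a' * R') = -(a * R - a' * R') := by ring
    rw [heq, abs_neg]
    refine (abs_mul_sub a a' R R').trans ?_
    have hb1 : |a - a'| ≤ |s - s'| / (x - x') := thf_lip hx
    have hb2 : |R| ≤ x ^ 2 := by rw [hR]; exact rrf_diff_le hxpos.le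
    have hb3 : |a'| ≤ 1 := by
      rw [abs_of_nonneg thf_nonneg]; exact thf_le_one
    have hb4 : |R - R'| ≤ 4 * x * |t - t'| := by
      have h1 : |rrf x (t + W ω - mk) - rrf x (t' + W ω - mk)| ≤ 2 * x * |t - t'| := by
        refine (rrf_lip hxpos.le).trans ?_
        have : t + W ω - mk - (t' + W ω - mk) = t - t' := by ring
        rw [this]
      have h2 : |rrf x t - rrf x t'| ≤ 2 * x * |t - t'| := rrf_lip hxpos.le
      have h3 : R - R' = (rrf x (t + W ω - mk) - rrf x (t' + W ω - mk))
          - (rrf x t - rrf x t') := by rw [hR, hR']; ring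
      rw [h3]
      refine (abs_sub _ _).trans ?_
      linarith
    have hstep1 : |a - a'| * |R| ≤ (|s - s'| / (x - x')) * x ^ 2 :=
      mul_le_mul hb1 hb2 (abs_nonneg _) (div_nonneg (abs_nonneg _) (by linarith))
    have hstep2 : |a'| * |R - R'| ≤ 1 * (4 * x * |t - t'|) :=
      mul_le_mul hb3 hb4 (abs_nonneg _) zero_le_one
    rw [hd]
    have : |s - s'| / (x - x') * x ^ 2 = x ^ 2 / (x - x') * |s - s'| := by ring
    linarith [hstep1, hstep2, this]
  refine hdiff.trans ?_
  rw [hd]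
  have h1 : 0 ≤ x ^ 2 / (x - x') := div_nonneg (sq_nonneg x) (by linarith)
  nlinarith [abs_nonneg (t - t'), abs_nonneg (s - s'),
    mul_nonneg h1 (abs_nonneg (t - t')), mul_nonneg (by linarith : (0:ℝ) ≤ 4*x) (abs_nonneg (s - s'))]

end KolmAux

namespace KolmAux

open Finset

variable {Ω : Type*} (S : SLE Ω)

lemma TTf_zero {μ y : ℕ → ℝ} : TTf μ y 0 = 0 := rfl
lemma TTf_succ {μ y : ℕ → ℝ} (m : ℕ) : TTf μ y (m+1) = TTf μ y m + (y m - μ m) := rfl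
lemma MMf_zero {μ y : ℕ → ℝ} : MMf μ y 0 = 0 := rfl
lemma GGf_zero {x x' : ℝ} {μ y : ℕ → ℝ} : GGf x x' μ y 0 = 0 := rfl
lemma GGf_succ {x x' : ℝ} {μ y : ℕ → ℝ} (m : ℕ) :
    GGf x x' μ y (m+1) = GGf x x' μ y m
      + thf x x' (MMf μ y m) * (rrf x (TTf μ y (m+1)) - rrf x (TTf μ y m)) := rfl

lemma GGf_split {x x' : ℝ} {μ y : ℕ → ℝ} (p : ℕ) :
    GGf x x' μ y (p+1) = GGf x x' μ y p
      + thf x x' (MMf μ y p) * (rrf x (TTf μ y p + (y p - μ p)) - rrf x (TTf μ y p)) := rfl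

lemma mem_compVec {X : ℕ → Ω → ℝ} (hX : ∀ i, X i ∈ S.H) (m : ℕ) (ψ : (ℕ → ℝ) → ℝ)
    (K : ℝ) (hK : 0 ≤ K)
    (hdep : ∀ y y' : ℕ → ℝ, (∀ i < m, y i = y' i) → ψ y = ψ y')
    (hlip : ∀ y y' : ℕ → ℝ, |ψ y - ψ y'| ≤ K * ∑ i ∈ range m, |y i - y' i|) :
    (fun ω => ψ (fun i => X i ω)) ∈ S.H := by
  classical
  have hcl : ClLip (fun v : Fin m → ℝ => ψ (fun i => if h : i < m then v ⟨i, h⟩ else 0)) := by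
    refine ⟨K * m + 1, by positivity, 1, fun v w => ?_⟩
    have hsum : ∑ i ∈ range m, |(if h : i < m then v ⟨i, h⟩ else 0)
        - (if h : i < m then w ⟨i, h⟩ else 0)| ≤ (m : ℝ) * ‖v - w‖ := by
      have hle : ∀ i ∈ range m, |(if h : i < m then v ⟨i, h⟩ else 0)
          - (if h : i < m then w ⟨i, h⟩ else 0)| ≤ ‖v - w‖ := by
        intro i hi
        have him : i < m := mem_range.1 hi
        rw [dif_pos him, dif_pos him]
        have := norm_le_pi_norm (v - w) ⟨i, him⟩
        simpa [Real.norm_eq_abs] using this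
      calc ∑ i ∈ range m, |(if h : i < m then v ⟨i, h⟩ else 0)
              - (if h : i < m then w ⟨i, h⟩ else 0)|
          ≤ ∑ _i ∈ range m, ‖v - w‖ := sum_le_sum hle
        _ = (m : ℝ) * ‖v - w‖ := by rw [sum_const, card_range, nsmul_eq_mul]
    calc |ψ (fun i => if h : i < m then v ⟨i, h⟩ else 0)
          - ψ (fun i => if h : i < m then w ⟨i, h⟩ else 0)|
        ≤ K * ∑ i ∈ range m, |(if h : i < m then v ⟨i, h⟩ else 0)
            - (if h : i < m then w ⟨i, h⟩ else 0)| := hlip _ _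
      _ ≤ K * ((m : ℝ) * ‖v - w‖) := mul_le_mul_of_nonneg_left hsum hK
      _ ≤ (K * m + 1) * (1 + ‖v‖ ^ 1 + ‖w‖ ^ 1) * ‖v - w‖ := by
          simp only [pow_one]
          nlinarith [norm_nonneg v, norm_nonneg w, norm_nonneg (v - w),
            mul_nonneg (mul_nonneg hK (Nat.cast_nonneg m)) (norm_nonneg (v - w)),
            mul_nonneg (norm_nonneg v) (norm_nonneg (v - w)),
            mul_nonneg (norm_nonneg w) (norm_nonneg (v - w)),
            mul_nonneg (mul_nonneg (mul_nonneg hK (Nat.cast_nonneg m)) (norm_nonneg v))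
              (norm_nonneg (v - w)),
            mul_nonneg (mul_nonneg (mul_nonneg hK (Nat.cast_nonneg m)) (norm_nonneg w))
              (norm_nonneg (v - w))]
  have hcomp := S.comp_mem m _ hcl (fun i => X i.val) (fun i => hX i.val)
  have heq : (fun ω => ψ (fun i => if h : i < m then (fun i : Fin m => X i.val ω) ⟨i, h⟩ else 0))
      = fun ω => ψ (fun i => X i ω) := by
    funext ω
    refine hdep _ _ (fun i hi => ?_)
    rw [dif_pos hi]
  rw [heq] at hcomp
  exact hcomp

/-- the independence test function. -/
noncomputable def phiT (x x' : ℝ) (μ : ℕ → ℝ) (p : ℕ) :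
    (Fin p → ℝ) → (Fin 1 → ℝ) → ℝ :=
  fun v w => -(GGf x x' μ (fun j => if h : j < p then v ⟨j, h⟩ else w 0) (p+1))

lemma phiT_bdd {x x' : ℝ} (hx : 0 ≤ x) (μ : ℕ → ℝ) (p : ℕ) :
    ∃ M : ℝ, ∀ v w, |phiT x x' μ p v w| ≤ M := by
  refine ⟨((p+1 : ℕ) : ℝ) * x ^ 2, fun v w => ?_⟩
  simp only [phiT, abs_neg]
  exact GGf_abs_le hx (p+1)

lemma phiT_lip {x x' : ℝ} (hx' : 0 < x') (hxx : x' < x) (μ : ℕ → ℝ) (p : ℕ) :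
    ∃ K : NNReal, LipschitzWith K (Function.uncurry (phiT x x' μ p)) := by
  classical
  set CG : ℝ := x ^ 2 / (x - x') + 4 * x with hCG
  have hCG0 : 0 ≤ CG := by
    have h0 : 0 ≤ x ^ 2 / (x - x') := div_nonneg (sq_nonneg x) (by linarith)
    rw [hCG]; nlinarith [lt_trans hx' hxx]
  have hK0 : 0 ≤ ((p : ℝ) + 1) * CG * ((p : ℝ) + 1) := by positivity
  refine ⟨Real.toNNReal (((p : ℝ) + 1) * CG * ((p : ℝ) + 1)),
    LipschitzWith.of_dist_le_mul (fun q q' => ?_)⟩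
  rw [Real.coe_toNNReal _ hK0]
  obtain ⟨v, w⟩ := q
  obtain ⟨v', w'⟩ := q'
  have hz : ∀ j ∈ range (p+1),
      |(if h : j < p then v ⟨j, h⟩ else w 0) - (if h : j < p then v' ⟨j, h⟩ else w' 0)|
      ≤ dist (v, w) (v', w') := by
    intro j _
    by_cases hjp : j < p
    · rw [dif_pos hjp, dif_pos hjp]
      have h1 : dist (v ⟨j, hjp⟩) (v' ⟨j, hjp⟩) ≤ dist v v' := dist_le_pi_dist v v' _
      have h2 : dist v v' ≤ dist (v, w) (v', w') := by
        rw [Prod.dist_eq]; exact le_max_left _ _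
      rw [Real.dist_eq] at h1
      exact h1.trans h2
    · rw [dif_neg hjp, dif_neg hjp]
      have h1 : dist (w 0) (w' 0) ≤ dist w w' := dist_le_pi_dist w w' _
      have h2 : dist w w' ≤ dist (v, w) (v', w') := by
        rw [Prod.dist_eq]; exact le_max_right _ _
      rw [Real.dist_eq] at h1
      exact h1.trans h2
  have hsum : ∑ j ∈ range (p+1),
      |(if h : j < p then v ⟨j, h⟩ else w 0) - (if h : j < p then v' ⟨j, h⟩ else w' 0)|
      ≤ ((p : ℝ) + 1) * dist (v, w) (v', w') := by
    calc ∑ j ∈ range (p+1), |(if h : j < p then v ⟨j, h⟩ else w 0)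
            - (if h : j < p then v' ⟨j, h⟩ else w' 0)|
        ≤ ∑ _j ∈ range (p+1), dist (v, w) (v', w') := sum_le_sum hz
      _ = ((p : ℝ) + 1) * dist (v, w) (v', w') := by
          rw [sum_const, card_range, nsmul_eq_mul]; push_cast; ring
  have hGl := GGf_lip (μ := μ) (y := fun j => if h : j < p then v ⟨j, h⟩ else w 0)
    (y' := fun j => if h : j < p then v' ⟨j, h⟩ else w' 0) hx' hxx (p+1)
  rw [← hCG] at hGl
  push_cast at hGl
  have habs : dist (Function.uncurry (phiT x x' μ p) (v, w))
      (Function.uncurry (phiT x x' μ p) (v', w'))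
      = |GGf x x' μ (fun j => if h : j < p then v ⟨j, h⟩ else w 0) (p+1)
        - GGf x x' μ (fun j => if h : j < p then v' ⟨j, h⟩ else w' 0) (p+1)| := by
    rw [Function.uncurry_apply_pair, Function.uncurry_apply_pair, Real.dist_eq]
    simp only [phiT]
    rw [show -(GGf x x' μ (fun j => if h : j < p then v ⟨j, h⟩ else w 0) (p+1))
        - -(GGf x x' μ (fun j => if h : j < p then v' ⟨j, h⟩ else w' 0) (p+1))
        = -(GGf x x' μ (fun j => if h : j < p then v ⟨j, h⟩ else w 0) (p+1)
          - GGf x x' μ (fun j => if h : j < p then v' ⟨j, h⟩ else w' 0) (p+1)) from by ring,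
      abs_neg]
  rw [habs]
  calc |GGf x x' μ (fun j => if h : j < p then v ⟨j, h⟩ else w 0) (p+1)
        - GGf x x' μ (fun j => if h : j < p then v' ⟨j, h⟩ else w' 0) (p+1)|
      ≤ ((p : ℝ) + 1) * CG * ∑ j ∈ range (p+1),
          |(if h : j < p then v ⟨j, h⟩ else w 0) - (if h : j < p then v' ⟨j, h⟩ else w' 0)| := hGl
    _ ≤ ((p : ℝ) + 1) * CG * (((p : ℝ) + 1) * dist (v, w) (v', w')) :=
        mul_le_mul_of_nonneg_left hsum (by positivity)
    _ = ((p : ℝ) + 1) * CG * ((p : ℝ) + 1) * dist (v, w) (v', w') := by ring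

end KolmAux

namespace KolmAux

open Finset

variable {Ω : Type*} (S : SLE Ω)

lemma step_common {x x' : ℝ} (hx' : 0 < x') (hxx : x' < x) {X : ℕ → Ω → ℝ}
    (hH : ∀ i, X i ∈ S.H) (μ : ℕ → ℝ)
    (hμ : ∀ k, S.eps (X k) ≤ μ k ∧ μ k ≤ S.E (X k)) (m : ℕ) :
    S.E (fun ω => -(GGf x x' μ (fun i => X i ω) m)) - 2 * S.E (fun ω => X m ω ^ 2)
      ≤ S.E (fun ω => Psi S (X m) x (μ m) (TTf μ (fun i => X i ω) m)
          (thf x x' (MMf μ (fun i => X i ω) m)) + (-(GGf x x' μ (fun i => X i ω) m))) := by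
  have hxpos : (0:ℝ) < x := lt_trans hx' hxx
  have hσ0 : 0 ≤ S.E (fun ω => X m ω ^ 2) := E_sq_nonneg S (hH m)
  set CG : ℝ := x ^ 2 / (x - x') + 4 * x with hCG
  have hCG0 : 0 ≤ CG := by
    have h0 : 0 ≤ x ^ 2 / (x - x') := div_nonneg (sq_nonneg x) (by linarith)
    rw [hCG]; nlinarith
  -- memberships
  have hGc : (fun ω => GGf x x' μ (fun i => X i ω) m) ∈ S.H := by
    refine mem_compVec S hH m (fun y => GGf x x' μ y m) ((m : ℝ) * CG)
      (mul_nonneg (Nat.cast_nonneg m) hCG0)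
      (fun y y' h => GGf_congr h m le_rfl) (fun y y' => ?_)
    have := GGf_lip (μ := μ) (y := y) (y' := y') hx' hxx m
    rw [← hCG] at this
    exact this
  have hTc : (fun ω => TTf μ (fun i => X i ω) m) ∈ S.H :=
    mem_compVec S hH m (fun y => TTf μ y m) 1 zero_le_one
      (fun y y' h => TTf_congr h m le_rfl)
      (fun y y' => by rw [one_mul]; exact TTf_lip m)
  have hMc : (fun ω => MMf μ (fun i => X i ω) m) ∈ S.H :=
    mem_compVec S hH m (fun y => MMf μ y m) 1 zero_le_one
      (fun y y' h => MMf_congr h m le_rfl)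
      (fun y y' => by rw [one_mul]; exact MMf_lip m)
  have hGneg : (fun ω => -(GGf x x' μ (fun i => X i ω) m)) ∈ S.H := mem_neg S hGc
  have hP : (fun ω => Psi S (X m) x (μ m) (TTf μ (fun i => X i ω) m)
      (thf x x' (MMf μ (fun i => X i ω) m))) ∈ S.H := by
    refine mem_comp2 S hTc hMc (fun t s => Psi S (X m) x (μ m) t (thf x x' s))
      (CG + 1) (by linarith) (fun t s t' s' => ?_)
    have hpl := Psi_th_lip S (hH m) hx' hxx (μ m) t s t' s'
    rw [← hCG] at hpl
    refine hpl.trans ?_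
    have hA : 0 ≤ |t| + |s| + |t'| + |s'| := by positivity
    have h1 : CG ≤ (CG + 1) * (1 + (|t| + |s| + |t'| + |s'|)) := by nlinarith
    have h2 : 0 ≤ |t - t'| + |s - s'| := by positivity
    calc CG * (|t - t'| + |s - s'|)
        ≤ ((CG + 1) * (1 + (|t| + |s| + |t'| + |s'|))) * (|t - t'| + |s - s'|) :=
          mul_le_mul_of_nonneg_right h1 h2
      _ = (CG + 1) * (1 + |t| + |s| + |t'| + |s'|) * (|t - t'| + |s - s'|) := by ring
  have houter : (fun ω => Psi S (X m) x (μ m) (TTf μ (fun i => X i ω) m)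
      (thf x x' (MMf μ (fun i => X i ω) m)) + (-(GGf x x' μ (fun i => X i ω) m))) ∈ S.H := by
    refine mem_comp2 S hP hGc (fun u g => u + (-g)) 1 one_pos (fun u g u' g' => ?_)
    have heq : u + -g - (u' + -g') = (u - u') - (g - g') := by ring
    rw [heq]
    refine (abs_sub _ _).trans ?_
    nlinarith [abs_nonneg (u - u'), abs_nonneg (g - g'), abs_nonneg u, abs_nonneg g,
      abs_nonneg u', abs_nonneg g',
      mul_nonneg (abs_nonneg u) (abs_nonneg (u - u')),
      mul_nonneg (abs_nonneg g) (abs_nonneg (u - u')),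
      mul_nonneg (abs_nonneg u') (abs_nonneg (u - u')),
      mul_nonneg (abs_nonneg g') (abs_nonneg (u - u')),
      mul_nonneg (abs_nonneg u) (abs_nonneg (g - g')),
      mul_nonneg (abs_nonneg g) (abs_nonneg (g - g')),
      mul_nonneg (abs_nonneg u') (abs_nonneg (g - g')),
      mul_nonneg (abs_nonneg g') (abs_nonneg (g - g'))]
  -- pointwise bound and monotonicity
  have hmono : S.E (fun ω => (-(GGf x x' μ (fun i => X i ω) m)) + (-(2 * S.E (fun ω' => X m ω' ^ 2))))
      ≤ S.E (fun ω => Psi S (X m) x (μ m) (TTf μ (fun i => X i ω) m)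
          (thf x x' (MMf μ (fun i => X i ω) m)) + (-(GGf x x' μ (fun i => X i ω) m))) := by
    refine S.mono _ _ (mem_add_const S hGneg _) houter (fun ω => ?_)
    have hpb : -(2 * S.E (fun ω' => X m ω' ^ 2))
        ≤ Psi S (X m) x (μ m) (TTf μ (fun i => X i ω) m)
            (thf x x' (MMf μ (fun i => X i ω) m)) := by
      refine Psi_bound S (hH m) hxpos ((hμ m).1) ((hμ m).2) _ _
        thf_nonneg thf_le_one (fun hpos => ?_)
      have h1 : MMf μ (fun i => X i ω) m < x := lt_of_thf_pos hxx hpos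
      have h2 := abs_TTf_le_MMf (μ := μ) (y := fun i => X i ω) m
      linarith
    linarith
  have hEc : S.E (fun ω => (-(GGf x x' μ (fun i => X i ω) m)) + (-(2 * S.E (fun ω' => X m ω' ^ 2))))
      = S.E (fun ω => -(GGf x x' μ (fun i => X i ω) m)) + (-(2 * S.E (fun ω' => X m ω' ^ 2))) :=
    E_add_const S hGneg _
  rw [hEc] at hmono
  linarith

lemma main_ind {x x' : ℝ} (hx' : 0 < x') (hxx : x' < x) {X : ℕ → Ω → ℝ}
    (hH : ∀ i, X i ∈ S.H) (hind : IndepSeq S X) (μ : ℕ → ℝ)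
    (hμ : ∀ k, S.eps (X k) ≤ μ k ∧ μ k ≤ S.E (X k)) :
    ∀ m : ℕ, -(2 * ∑ i ∈ range m, S.E (fun ω => X i ω ^ 2))
      ≤ S.E (fun ω => -(GGf x x' μ (fun i => X i ω) m)) := by
  have hxpos : (0:ℝ) < x := lt_trans hx' hxx
  intro m
  induction m with
  | zero =>
      have hfun : (fun ω => -(GGf x x' μ (fun i => X i ω) 0)) = fun _ => (0:ℝ) := by
        funext ω; rw [GGf_zero, neg_zero]
      rw [hfun, S.isConst]
      simp
  | succ m ih =>
      have heq : S.E (fun ω => -(GGf x x' μ (fun i => X i ω) (m+1)))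
          = S.E (fun ω => Psi S (X m) x (μ m) (TTf μ (fun i => X i ω) m)
              (thf x x' (MMf μ (fun i => X i ω) m)) + (-(GGf x x' μ (fun i => X i ω) m))) := by
        cases m with
        | zero =>
            have hL : S.E (fun ω => -(GGf x x' μ (fun i => X i ω) (0+1)))
                = Psi S (X 0) x (μ 0) 0 (thf x x' 0) := by
              rw [Psi]
              congr 1
              funext ω
              rw [GGf_succ, TTf_succ, GGf_zero, TTf_zero, MMf_zero]
              rw [show (0:ℝ) + ((fun i => X i ω) 0 - μ 0) = 0 + X 0 ω - μ 0 from by ring]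
              ring
            have hR : S.E (fun ω => Psi S (X 0) x (μ 0) (TTf μ (fun i => X i ω) 0)
                (thf x x' (MMf μ (fun i => X i ω) 0)) + (-(GGf x x' μ (fun i => X i ω) 0)))
                = Psi S (X 0) x (μ 0) 0 (thf x x' 0) := by
              have hconst : (fun ω => Psi S (X 0) x (μ 0) (TTf μ (fun i => X i ω) 0)
                  (thf x x' (MMf μ (fun i => X i ω) 0)) + (-(GGf x x' μ (fun i => X i ω) 0)))
                  = fun _ => Psi S (X 0) x (μ 0) 0 (thf x x' 0) := by
                funext ω
                rw [TTf_zero, MMf_zero, GGf_zero, neg_zero, add_zero]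
              rw [hconst, S.isConst]
            rw [hL, hR]
        | succ i =>
            have hkey := hind i (phiT x x' μ (i+1)) (phiT_lip hx' hxx μ (i+1))
              (phiT_bdd hxpos.le μ (i+1))
            have hL : S.E (fun ω => phiT x x' μ (i+1) (fun j : Fin (i+1) => X j.val ω)
                  (fun _ : Fin 1 => X (i+1) ω))
                = S.E (fun ω => -(GGf x x' μ (fun i => X i ω) (i+1+1))) := by
              congr 1
              funext ω
              show -(GGf x x' μ (fun j => if h : j < i+1
                  then (fun j : Fin (i+1) => X j.val ω) ⟨j, h⟩
                  else (fun _ : Fin 1 => X (i+1) ω) 0) (i+1+1)) = _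
              congr 1
              refine GGf_congr (fun j hj => ?_) (i+1+1) le_rfl
              by_cases hjp : j < i+1
              · exact dif_pos hjp
              · have hje : j = i+1 := by omega
                subst hje
                exact dif_neg hjp
            have hR : S.E (fun ω => S.E (fun ω' => phiT x x' μ (i+1)
                  (fun j : Fin (i+1) => X j.val ω) (fun _ : Fin 1 => X (i+1) ω')))
                = S.E (fun ω => Psi S (X (i+1)) x (μ (i+1)) (TTf μ (fun i => X i ω) (i+1))
                    (thf x x' (MMf μ (fun i => X i ω) (i+1)))
                    + (-(GGf x x' μ (fun i => X i ω) (i+1)))) := by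
              congr 1
              funext ω
              have hfun : (fun ω' => phiT x x' μ (i+1) (fun j : Fin (i+1) => X j.val ω)
                    (fun _ : Fin 1 => X (i+1) ω'))
                  = (fun ω' => -(thf x x' (MMf μ (fun i => X i ω) (i+1))
                      * (rrf x (TTf μ (fun i => X i ω) (i+1) + X (i+1) ω' - μ (i+1))
                        - rrf x (TTf μ (fun i => X i ω) (i+1))))
                      + (-(GGf x x' μ (fun i => X i ω) (i+1)))) := by
                funext ω'
                show -(GGf x x' μ (fun j => if h : j < i+1
                    then (fun j : Fin (i+1) => X j.val ω) ⟨j, h⟩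
                    else (fun _ : Fin 1 => X (i+1) ω') 0) (i+1+1)) = _
                have hagree : ∀ j < i+1, (fun j => if h : j < i+1
                    then (fun j : Fin (i+1) => X j.val ω) ⟨j, h⟩
                    else (fun _ : Fin 1 => X (i+1) ω') 0) j = X j ω := by
                  intro j hj
                  exact dif_pos hj
                rw [GGf_split]
                rw [GGf_congr hagree (i+1) le_rfl, MMf_congr hagree (i+1) le_rfl,
                  TTf_congr hagree (i+1) le_rfl]
                rw [show (if h : i+1 < i+1
                    then (fun j : Fin (i+1) => X j.val ω) ⟨i+1, h⟩
                    else (fun _ : Fin 1 => X (i+1) ω') 0) = X (i+1) ω'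
                  from dif_neg (lt_irrefl _)]
                rw [show TTf μ (fun i => X i ω) (i+1) + (X (i+1) ω' - μ (i+1))
                    = TTf μ (fun i => X i ω) (i+1) + X (i+1) ω' - μ (i+1) from by ring]
                ring
              rw [hfun]
              exact E_add_const S (mem_psi_integrand S (hH (i+1)) hxpos.le (μ (i+1))
                (TTf μ (fun i => X i ω) (i+1))
                (thf x x' (MMf μ (fun i => X i ω) (i+1)))) _
            exact hL.symm.trans (hkey.trans hR)
      have hcommon := step_common S hx' hxx hH μ hμ m
      rw [Finset.sum_range_succ, heq]
      linarith [ih, hcommon]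

end KolmAux

namespace KolmAux

open Finset

variable {Ω : Type*}

lemma final_fixed (S : SLE Ω) (V : Set Ω → ℝ)
    (hsandwich : ∀ (A : Set Ω) (f g : Ω → ℝ), f ∈ S.H → g ∈ S.H →
      (∀ ω, f ω ≤ Set.indicator A (fun _ => (1 : ℝ)) ω) →
      (∀ ω, Set.indicator A (fun _ => (1 : ℝ)) ω ≤ g ω) →
      S.E f ≤ V A ∧ V A ≤ S.E g)
    (X : ℕ → Ω → ℝ) (hH : ∀ i, X i ∈ S.H) (hind : IndepSeq S X)
    (n : ℕ) (μ : ℕ → ℝ) (hμ : ∀ k, S.eps (X k) ≤ μ k ∧ μ k ≤ S.E (X k))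
    (x x' : ℝ) (hx'0 : 0 < x') (hx'x : x' < x) :
    1 - V {ω | ∃ k < n, x ≤ |∑ i ∈ Finset.range (k + 1), (X i ω - μ i)|}ᶜ
      ≤ 2 / x' ^ 2 * ∑ i ∈ Finset.range n, S.E (fun ω => (X i ω) ^ 2) := by
  classical
  have hxpos : (0:ℝ) < x := lt_trans hx'0 hx'x
  have hx'2 : (0:ℝ) < x' ^ 2 := by positivity
  set B : Set Ω := {ω | ∃ k < n, x ≤ |∑ i ∈ Finset.range (k + 1), (X i ω - μ i)|} with hB
  -- membership pieces
  set CG : ℝ := x ^ 2 / (x - x') + 4 * x with hCG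
  have hCG0 : 0 ≤ CG := by
    have h0 : 0 ≤ x ^ 2 / (x - x') := div_nonneg (sq_nonneg x) (by linarith)
    rw [hCG]; nlinarith
  have hGc : (fun ω => GGf x x' μ (fun i => X i ω) n) ∈ S.H := by
    refine mem_compVec S hH n (fun y => GGf x x' μ y n) ((n : ℝ) * CG)
      (mul_nonneg (Nat.cast_nonneg n) hCG0)
      (fun y y' h => GGf_congr h n le_rfl) (fun y y' => ?_)
    have := GGf_lip (μ := μ) (y := y) (y' := y') hx'0 hx'x n
    rw [← hCG] at this
    exact this
  have hmemNeg : (fun ω => -(GGf x x' μ (fun i => X i ω) n)) ∈ S.H := mem_neg S hGc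
  have hmemIn : (fun ω => (1 / x' ^ 2) * (-(GGf x x' μ (fun i => X i ω) n))) ∈ S.H := by
    refine mem_comp1 S hmemNeg (fun s => (1 / x' ^ 2) * s) (1 / x' ^ 2 + 1)
      (by positivity) (fun s t => ?_)
    rw [show (1 / x' ^ 2) * s - (1 / x' ^ 2) * t = (1 / x' ^ 2) * (s - t) from by ring,
      abs_mul, abs_of_nonneg (by positivity : (0:ℝ) ≤ 1 / x' ^ 2)]
    nlinarith [abs_nonneg (s - t), abs_nonneg s, abs_nonneg t,
      mul_nonneg (abs_nonneg s) (abs_nonneg (s - t)),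
      mul_nonneg (abs_nonneg t) (abs_nonneg (s - t)),
      (by positivity : (0:ℝ) ≤ 1 / x' ^ 2)]
  have hf : (fun ω => (1 / x' ^ 2) * (-(GGf x x' μ (fun i => X i ω) n)) + 1) ∈ S.H :=
    mem_add_const S hmemIn 1
  -- sandwich
  have hfle : ∀ ω, (1 / x' ^ 2) * (-(GGf x x' μ (fun i => X i ω) n)) + 1
      ≤ Set.indicator Bᶜ (fun _ => (1:ℝ)) ω := by
    intro ω
    by_cases hω : ω ∈ B
    · rw [Set.indicator_of_notMem (by simpa using hω)]
      rw [hB] at hω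
      obtain ⟨k, hk, hT⟩ := hω
      have hT' : x ≤ |TTf μ (fun i => X i ω) (k + 1)| := by
        rw [TTf_sum]; exact hT
      have hGe : x' ^ 2 ≤ GGf x x' μ (fun i => X i ω) n :=
        GGf_ge_event hx'0 hx'x (Nat.succ_le_succ (Nat.zero_le k)) hk hT'
      have hinv : (1 / x' ^ 2) * x' ^ 2 = 1 := by field_simp
      nlinarith [mul_le_mul_of_nonneg_left hGe
        (le_of_lt (show (0:ℝ) < 1 / x' ^ 2 by positivity))]
    · rw [Set.indicator_of_mem (by simpa using hω)]
      have hGnn : 0 ≤ GGf x x' μ (fun i => X i ω) n := GGf_nonneg hx'0 hx'x n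
      nlinarith [(by positivity : (0:ℝ) ≤ 1 / x' ^ 2),
        mul_nonneg (by positivity : (0:ℝ) ≤ 1 / x' ^ 2) hGnn]
  have hgle : ∀ ω, Set.indicator Bᶜ (fun _ => (1:ℝ)) ω ≤ (fun _ => (1:ℝ)) ω := by
    intro ω
    by_cases hω : ω ∈ Bᶜ
    · rw [Set.indicator_of_mem hω]
    · rw [Set.indicator_of_notMem hω]; norm_num
  have hsand := (hsandwich Bᶜ _ (fun _ => (1:ℝ)) hf (S.const_mem 1) hfle hgle).1
  -- compute E f
  have hEf1 : S.E (fun ω => (1 / x' ^ 2) * (-(GGf x x' μ (fun i => X i ω) n)) + 1)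
      = S.E (fun ω => (1 / x' ^ 2) * (-(GGf x x' μ (fun i => X i ω) n))) + 1 :=
    E_add_const S hmemIn 1
  have hEf2 : S.E (fun ω => (1 / x' ^ 2) * (-(GGf x x' μ (fun i => X i ω) n)))
      = (1 / x' ^ 2) * S.E (fun ω => -(GGf x x' μ (fun i => X i ω) n)) :=
    S.poshom (1 / x' ^ 2) (by positivity) _ hmemNeg
  have hmain := main_ind S hx'0 hx'x hH hind μ hμ n
  -- conclude
  have h1 : 1 - 2 / x' ^ 2 * ∑ i ∈ Finset.range n, S.E (fun ω => X i ω ^ 2) ≤ V Bᶜ := by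
    rw [hEf1, hEf2] at hsand
    have : (1 / x' ^ 2) * (-(2 * ∑ i ∈ Finset.range n, S.E (fun ω => X i ω ^ 2)))
        ≤ (1 / x' ^ 2) * S.E (fun ω => -(GGf x x' μ (fun i => X i ω) n)) :=
      mul_le_mul_of_nonneg_left hmain (by positivity)
    have heq : (1 / x' ^ 2) * (-(2 * ∑ i ∈ Finset.range n, S.E (fun ω => X i ω ^ 2)))
        = -(2 / x' ^ 2 * ∑ i ∈ Finset.range n, S.E (fun ω => X i ω ^ 2)) := by ring
    linarith [hsand, this, heq.ge, heq.le]
  linarith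

end KolmAux



/-- Kolmogorov-type maximal inequality under the lower capacity (Lemma 2.7). -/
theorem maximal_inequality_lower (S : SLE Ω) (V : Set Ω → ℝ)
    (hsandwich : ∀ (A : Set Ω) (f g : Ω → ℝ), f ∈ S.H → g ∈ S.H →
      (∀ ω, f ω ≤ Set.indicator A (fun _ => (1 : ℝ)) ω) →
      (∀ ω, Set.indicator A (fun _ => (1 : ℝ)) ω ≤ g ω) →
      S.E f ≤ V A ∧ V A ≤ S.E g)
    (hVmono : ∀ A B : Set Ω, A ⊆ B → V A ≤ V B)
    (hVsub : ∀ A B : Set Ω, V (A ∪ B) ≤ V A + V B)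
    (X : ℕ → Ω → ℝ) (hH : ∀ i, X i ∈ S.H) (hind : IndepSeq S X)
    (n : ℕ) (μ : ℕ → ℝ) (hμ : ∀ k, S.eps (X k) ≤ μ k ∧ μ k ≤ S.E (X k)) :
    ∀ x : ℝ, 0 < x →
      1 - V {ω | ∃ k < n,
          x ≤ |∑ i ∈ Finset.range (k + 1), (X i ω - μ i)|}ᶜ ≤
        2 / x ^ 2 * ∑ i ∈ Finset.range n, S.E (fun ω => (X i ω) ^ 2) := by
  intro x hx
  have key : ∀ k : ℕ, 1 - V {ω | ∃ k < n,
      x ≤ |∑ i ∈ Finset.range (k + 1), (X i ω - μ i)|}ᶜ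
      ≤ 2 / (x - x / ((k:ℝ) + 2)) ^ 2 * ∑ i ∈ Finset.range n, S.E (fun ω => (X i ω) ^ 2) := by
    intro k
    have h2 : (0:ℝ) < (k:ℝ) + 2 := by positivity
    have hq : 0 < x / ((k:ℝ) + 2) := by positivity
    have hlt : x / ((k:ℝ) + 2) < x := by
      rw [div_lt_iff₀ h2]; nlinarith
    exact KolmAux.final_fixed S V hsandwich X hH hind n μ hμ x _ (by linarith) (by linarith)
  have h1 : Filter.Tendsto (fun k : ℕ => x / ((k:ℝ) + 2)) Filter.atTop (nhds 0) := by
    apply Filter.Tendsto.div_atTop tendsto_const_nhds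
    exact Filter.tendsto_atTop_add_const_right _ 2 tendsto_natCast_atTop_atTop
  have h2 : Filter.Tendsto (fun k : ℕ => x - x / ((k:ℝ) + 2)) Filter.atTop (nhds x) := by
    have := Filter.Tendsto.sub (tendsto_const_nhds (x := x)) h1
    simpa using this
  have h3 : Filter.Tendsto (fun k : ℕ => (x - x / ((k:ℝ) + 2)) ^ 2) Filter.atTop
      (nhds (x ^ 2)) := h2.pow 2
  have h4 : Filter.Tendsto (fun k : ℕ => 2 / (x - x / ((k:ℝ) + 2)) ^ 2) Filter.atTop
      (nhds (2 / x ^ 2)) := Filter.Tendsto.div tendsto_const_nhds h3 (by positivity)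
  have h5 : Filter.Tendsto (fun k : ℕ => 2 / (x - x / ((k:ℝ) + 2)) ^ 2
      * ∑ i ∈ Finset.range n, S.E (fun ω => (X i ω) ^ 2)) Filter.atTop
      (nhds (2 / x ^ 2 * ∑ i ∈ Finset.range n, S.E (fun ω => (X i ω) ^ 2))) :=
    h4.mul_const _
  exact ge_of_tendsto h5 (Filter.Eventually.of_forall key)

end
end
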